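/- arXiv:1202.3870 — 6 statements merged into one kernel-verified Lean document; each statement's English description precedes it below -/
import Mathlib

section
/- Let E be a Banach space, p ∈ (1,∞), μ ∈ (1/p,1], and let T > 0 be finite. There exist a constant C = C(p,μ,T) and a linear map Ext from W^1_{p,μ}((0,T);E) to W^1_{p,μ}((0,∞);E) such that (Ext u)(t) = u(t) for all t ∈ (0,T) and ‖Ext u‖_{W^1_{p,μ}((0,∞);E)} ≤ C ‖u‖_{W^1_{p,μ}((0,T);E)} for all u ∈ W^1_{p,μ}((0,T);E). -/
open MeasureTheory Set Filter Topology
open scoped ENNReal NNReal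

noncomputable section

/-- The interval `(0,T)` for `T ∈ (0,∞]`. -/
def Iset (T : ℝ≥0∞) : Set ℝ := {t : ℝ | 0 < t ∧ ENNReal.ofReal t < T}

/-- The `p`-th power of the `L_{p,μ}(I;E)` norm of `f`. -/
def wInt (p μ : ℝ) (I : Set ℝ) {E : Type*} [NormedAddCommGroup E] (f : ℝ → E) : ℝ≥0∞ :=
  ∫⁻ t in I, ENNReal.ofReal (t ^ (p * (1 - μ)) * ‖f t‖ ^ p)

/-- The norm of `L_{p,μ}(I;E)`. -/
def wNorm (p μ : ℝ) (I : Set ℝ) {E : Type*} [NormedAddCommGroup E] (f : ℝ → E) : ℝ≥0∞ :=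
  (wInt p μ I f) ^ (1 / p)

/-- Membership in `L_{p,μ}(I;E)`. -/
def MemWLp (p μ : ℝ) (I : Set ℝ) {E : Type*} [NormedAddCommGroup E] (f : ℝ → E) : Prop :=
  AEStronglyMeasurable f (MeasureTheory.volume.restrict I) ∧ wInt p μ I f < ⊤

/-- `u` is locally absolutely continuous on the interval `I` with a.e. derivative `u'`,
expressed via the fundamental theorem of calculus. -/
def LocAC (I : Set ℝ) {E : Type*} [NormedAddCommGroup E] [NormedSpace ℝ E] (u u' : ℝ → E) : Prop :=
  ∀ a b : ℝ, a ∈ I → b ∈ I → a ≤ b →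
    IntegrableOn u' (Ioo a b) ∧ u b - u a = ∫ t in Ioo a b, u' t

/-- Membership in the weighted Sobolev space `W^1_{p,μ}(I;E)`. -/
def MemW1 (p μ : ℝ) (I : Set ℝ) {E : Type*} [NormedAddCommGroup E] [NormedSpace ℝ E]
    (u u' : ℝ → E) : Prop :=
  MemWLp p μ I u ∧ MemWLp p μ I u' ∧ LocAC I u u'

/-! ### Auxiliary lemmas -/

lemma exists_lam (T : ℝ) {E : Type*} [NormedAddCommGroup E] [NormedSpace ℝ E] :
    ∃ Λ : (ℝ → E) →ₗ[ℝ] E, ∀ (u : ℝ → E) (L : E), Tendsto u (𝓝[<] T) (𝓝 L) → Λ u = L := by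
  classical
  haveI : Nonempty E := ⟨0⟩
  let S : Submodule ℝ (ℝ → E) :=
    { carrier := {u | ∃ L : E, Tendsto u (𝓝[<] T) (𝓝 L)}
      add_mem' := fun ⟨L, hL⟩ ⟨M, hM⟩ => ⟨L + M, hL.add hM⟩
      zero_mem' := ⟨0, tendsto_const_nhds⟩
      smul_mem' := fun c _ ⟨L, hL⟩ => ⟨c • L, hL.const_smul c⟩ }
  let ℓ : S →ₗ[ℝ] E :=
    { toFun := fun u => limUnder (𝓝[<] T) u.1
      map_add' := by
        rintro ⟨u, L, hL⟩ ⟨v, M, hM⟩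
        simp only
        have h1 : Tendsto (u + v) (𝓝[<] T) (𝓝 (L + M)) := hL.add hM
        rw [show ((⟨u, ⟨L, hL⟩⟩ + ⟨v, ⟨M, hM⟩⟩ : S) : ℝ → E) = u + v from rfl,
          h1.limUnder_eq, hL.limUnder_eq, hM.limUnder_eq]
      map_smul' := by
        rintro c ⟨u, L, hL⟩
        simp only [RingHom.id_apply]
        have h1 : Tendsto (c • u) (𝓝[<] T) (𝓝 (c • L)) := hL.const_smul c
        rw [show ((c • ⟨u, ⟨L, hL⟩⟩ : S) : ℝ → E) = c • u from rfl,
          h1.limUnder_eq, hL.limUnder_eq] }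
  obtain ⟨Λ, hΛ⟩ := ℓ.exists_extend
  refine ⟨Λ, fun u L hL => ?_⟩
  have hu : u ∈ S := ⟨L, hL⟩
  have h1 := LinearMap.congr_fun hΛ ⟨u, hu⟩
  simp only [LinearMap.coe_comp, Function.comp_apply, Submodule.coe_subtype] at h1
  rw [h1]
  exact hL.limUnder_eq

lemma aux_add_rpow {p : ℝ} (hp : 0 ≤ p) (x y : ℝ≥0∞) :
    (x + y) ^ p ≤ 2 ^ p * (x ^ p + y ^ p) := by
  calc (x + y) ^ p ≤ (2 * (x ⊔ y)) ^ p := by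
        refine ENNReal.rpow_le_rpow ?_ hp
        rw [two_mul]
        exact add_le_add le_sup_left le_sup_right
    _ = 2 ^ p * (x ⊔ y) ^ p := ENNReal.mul_rpow_of_nonneg _ _ hp
    _ ≤ 2 ^ p * (x ^ p + y ^ p) := by
        refine mul_le_mul_right ?_ _
        rcases le_total x y with h | h
        · rw [sup_eq_right.2 h]; exact le_add_self
        · rw [sup_eq_left.2 h]; exact le_add_self.trans_eq (add_comm _ _)

lemma aux_lp {E : Type*} [NormedAddCommGroup E] {p μ T c : ℝ} (hp : 0 < p) (hμ1 : μ ≤ 1)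
    (hc : 0 < c) (f : ℝ → E) :
    ∫⁻ t in Ioo c T, ENNReal.ofReal (‖f t‖ ^ p) ≤
      ENNReal.ofReal (c ^ (-(p * (1 - μ)))) * wInt p μ (Ioo 0 T) f := by
  set e := p * (1 - μ) with he_def
  have he : 0 ≤ e := mul_nonneg hp.le (by linarith)
  calc ∫⁻ t in Ioo c T, ENNReal.ofReal (‖f t‖ ^ p)
      ≤ ∫⁻ t in Ioo c T, ENNReal.ofReal (c ^ (-e)) *
          ENNReal.ofReal (t ^ e * ‖f t‖ ^ p) := by
        refine setLIntegral_mono' measurableSet_Ioo fun t ht => ?_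
        rw [← ENNReal.ofReal_mul (Real.rpow_nonneg hc.le _)]
        refine ENNReal.ofReal_le_ofReal ?_
        have h1 : c ^ e * ‖f t‖ ^ p ≤ t ^ e * ‖f t‖ ^ p :=
          mul_le_mul_of_nonneg_right (Real.rpow_le_rpow hc.le ht.1.le he)
            (Real.rpow_nonneg (norm_nonneg _) _)
        have h2 : c ^ (-e) * (c ^ e * ‖f t‖ ^ p) = ‖f t‖ ^ p := by
          rw [← mul_assoc, ← Real.rpow_add hc, neg_add_cancel, Real.rpow_zero, one_mul]
        calc ‖f t‖ ^ p = c ^ (-e) * (c ^ e * ‖f t‖ ^ p) := h2.symm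
          _ ≤ c ^ (-e) * (t ^ e * ‖f t‖ ^ p) :=
            mul_le_mul_of_nonneg_left h1 (Real.rpow_nonneg hc.le _)
    _ = ENNReal.ofReal (c ^ (-e)) * ∫⁻ t in Ioo c T, ENNReal.ofReal (t ^ e * ‖f t‖ ^ p) :=
        lintegral_const_mul' _ _ ENNReal.ofReal_ne_top
    _ ≤ ENNReal.ofReal (c ^ (-e)) * wInt p μ (Ioo 0 T) f :=
        mul_le_mul_right (lintegral_mono_set (Ioo_subset_Ioo hc.le le_rfl)) _

lemma aux_holder {E : Type*} [NormedAddCommGroup E] {p μ T c : ℝ} (hp : 1 < p) (hμ1 : μ ≤ 1)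
    (hc : 0 < c) {f : ℝ → E}
    (hm : AEStronglyMeasurable f (volume.restrict (Ioo c T))) :
    ∫⁻ t in Ioo c T, ENNReal.ofReal ‖f t‖ ≤
      (ENNReal.ofReal (c ^ (-(p * (1 - μ)))) * wInt p μ (Ioo 0 T) f) ^ (1 / p) *
        ENNReal.ofReal (T - c) ^ (1 - 1 / p) := by
  have hpq : p.HolderConjugate (Real.conjExponent p) := Real.HolderConjugate.conjExponent hp
  set q := Real.conjExponent p with hq
  have hq' : 1 / q = 1 - 1 / p := by
    have := hpq.inv_add_inv_eq_one
    rw [one_div, one_div]; linarith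
  have hmeas : AEMeasurable (fun t => ENNReal.ofReal ‖f t‖) (volume.restrict (Ioo c T)) :=
    ENNReal.measurable_ofReal.comp_aemeasurable hm.norm.aemeasurable
  calc ∫⁻ t in Ioo c T, ENNReal.ofReal ‖f t‖
      = ∫⁻ t in Ioo c T, (fun t => ENNReal.ofReal ‖f t‖) t * (fun _ => (1:ℝ≥0∞)) t := by
        simp
    _ ≤ (∫⁻ t in Ioo c T, ENNReal.ofReal ‖f t‖ ^ p) ^ (1 / p) *
        (∫⁻ t in Ioo c T, (1:ℝ≥0∞) ^ q) ^ (1 / q) :=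
        ENNReal.lintegral_mul_le_Lp_mul_Lq _ hpq hmeas aemeasurable_const
    _ ≤ (ENNReal.ofReal (c ^ (-(p * (1 - μ)))) * wInt p μ (Ioo 0 T) f) ^ (1 / p) *
        ENNReal.ofReal (T - c) ^ (1 - 1 / p) := by
        refine mul_le_mul' (ENNReal.rpow_le_rpow ?_ (by positivity)) ?_
        · calc ∫⁻ t in Ioo c T, ENNReal.ofReal ‖f t‖ ^ p
              = ∫⁻ t in Ioo c T, ENNReal.ofReal (‖f t‖ ^ p) := by
                refine lintegral_congr fun t => ?_
                rw [ENNReal.ofReal_rpow_of_nonneg (norm_nonneg _) (by positivity)]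
            _ ≤ _ := aux_lp (by linarith) hμ1 hc f
        · simp only [ENNReal.one_rpow, setLIntegral_one, Real.volume_Ioo, hq']
          exact le_rfl

lemma aux_integrableOn {E : Type*} [NormedAddCommGroup E] {p μ T c : ℝ} (hp : 1 < p)
    (hμ1 : μ ≤ 1) (hc : 0 < c) {f : ℝ → E}
    (hm : AEStronglyMeasurable f (volume.restrict (Ioo 0 T)))
    (hfin : wInt p μ (Ioo 0 T) f < ⊤) :
    IntegrableOn f (Ioo c T) := by
  have hsub : Ioo c T ⊆ Ioo 0 T := Ioo_subset_Ioo hc.le le_rfl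
  have hm' : AEStronglyMeasurable f (volume.restrict (Ioo c T)) :=
    hm.mono_measure (Measure.restrict_mono hsub le_rfl)
  refine ⟨hm', (hasFiniteIntegral_iff_norm f).2 ?_⟩
  refine lt_of_le_of_lt (aux_holder hp hμ1 hc hm') ?_
  refine ENNReal.mul_lt_top ?_ ?_
  · refine ENNReal.rpow_lt_top_of_nonneg (by positivity) ?_
    exact ENNReal.mul_ne_top ENNReal.ofReal_ne_top hfin.ne
  · exact ENNReal.rpow_lt_top_of_nonneg
      (by rw [sub_nonneg]; exact (div_le_one (by linarith)).2 hp.le) ENNReal.ofReal_ne_top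

lemma aux_limit {E : Type*} [NormedAddCommGroup E] [NormedSpace ℝ E] [CompleteSpace E]
    {T : ℝ} {u u' : ℝ → E}
    (hAC : ∀ a b : ℝ, a ∈ Ioo 0 T → b ∈ Ioo 0 T → a ≤ b →
      IntegrableOn u' (Ioo a b) ∧ u b - u a = ∫ t in Ioo a b, u' t)
    (hint : ∀ a ∈ Ioo (0:ℝ) T, IntegrableOn u' (Ioo a T)) :
    ∀ a ∈ Ioo (0:ℝ) T, Tendsto u (𝓝[<] T) (𝓝 (u a + ∫ t in Ioo a T, u' t)) := by
  intro a ha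
  have haT : a < T := ha.2
  have hIcc : IntegrableOn u' (Icc a T) := by
    rw [integrableOn_Icc_iff_integrableOn_Ioo]
    exact hint a ha
  have hcont : ContinuousOn (fun x => ∫ t in Ioc a x, u' t) (Icc a T) :=
    intervalIntegral.continuousOn_primitive hIcc
  have hcw : ContinuousWithinAt (fun x => ∫ t in Ioc a x, u' t) (Icc a T) T :=
    hcont.continuousWithinAt ⟨haT.le, le_rfl⟩
  have hmono : 𝓝[<] T ≤ 𝓝[Icc a T] T := by
    rw [← nhdsWithin_Ioo_eq_nhdsLT haT]
    exact nhdsWithin_mono _ Ioo_subset_Icc_self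
  have h1 : Tendsto (fun x => ∫ t in Ioc a x, u' t) (𝓝[<] T)
      (𝓝 (∫ t in Ioo a T, u' t)) := by
    rw [← integral_Ioc_eq_integral_Ioo]
    exact hcw.mono_left hmono
  have h2 : Tendsto (fun x => u a + ∫ t in Ioc a x, u' t) (𝓝[<] T)
      (𝓝 (u a + ∫ t in Ioo a T, u' t)) := tendsto_const_nhds.add h1
  refine h2.congr' ?_
  filter_upwards [Ioo_mem_nhdsLT_of_mem (⟨haT, le_rfl⟩ : T ∈ Ioc a T)] with x hx
  have hx' : x ∈ Ioo 0 T := ⟨lt_trans ha.1 hx.1, hx.2⟩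
  have := (hAC a x ha hx' hx.1.le).2
  rw [integral_Ioc_eq_integral_Ioo, ← this]
  abel

/-- Extension operator on `W^1_{p,μ}((0,T);E)` for finite `T`: there are a
constant `C = C(p,μ,T)` and a linear extension operator from `W^1_{p,μ}((0,T);E)` to
`W^1_{p,μ}((0,∞);E)` of norm at most `C`. -/
theorem stmt_8 {E : Type*} [NormedAddCommGroup E] [NormedSpace ℝ E] [CompleteSpace E]
    (p μ : ℝ) (hp : 1 < p) (hμ : 1 / p < μ) (hμ1 : μ ≤ 1)
    (T : ℝ) (hT : 0 < T) :
    ∃ C : ℝ, 0 < C ∧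
      ∃ Ext : (ℝ → E) → (ℝ → E),
        (∀ u v : ℝ → E, Ext (u + v) = Ext u + Ext v) ∧
        (∀ (c : ℝ) (u : ℝ → E), Ext (c • u) = c • Ext u) ∧
        ∀ u u' : ℝ → E, MemW1 p μ (Ioo 0 T) u u' →
          ∃ v' : ℝ → E,
            MemW1 p μ (Ioi 0) (Ext u) v' ∧
            (∀ t ∈ Ioo (0 : ℝ) T, Ext u t = u t) ∧
            (wInt p μ (Ioi 0) (Ext u) + wInt p μ (Ioi 0) v') ^ (1 / p)
              ≤ ENNReal.ofReal C *
                (wInt p μ (Ioo 0 T) u + wInt p μ (Ioo 0 T) u') ^ (1 / p) := by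
  classical
  have hp0 : 0 < p := lt_trans one_pos hp
  set e := p * (1 - μ) with he_def
  have he : 0 ≤ e := mul_nonneg hp0.le (by linarith)
  have hT2 : (0:ℝ) < T / 2 := by linarith
  obtain ⟨Λ, hΛspec⟩ := exists_lam (E := E) T
  -- constants
  set Ku : ℝ≥0∞ := ENNReal.ofReal ((T / 2) ^ (-e)) with hKu_def
  set M : ℝ≥0∞ := ENNReal.ofReal (T / 2) ^ (1 - 1 / p) with hM_def
  set D : ℝ≥0∞ := max (ENNReal.ofReal (2 / T)) 1 with hD_def
  set K : ℝ≥0∞ := D ^ p * M ^ p * 2 ^ p * Ku with hK_def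
  set G : ℝ≥0∞ := ENNReal.ofReal ((2 * T) ^ e) * ENNReal.ofReal T with hG_def
  set G' : ℝ≥0∞ := G * ENNReal.ofReal ((1 / T) ^ p) with hG'_def
  set C₀ : ℝ≥0∞ := 1 + (G + G') * K with hC0_def
  have h1p : 0 ≤ 1 - 1 / p := by
    rw [sub_nonneg]; exact (div_le_one hp0).2 hp.le
  have hDtop : D ≠ ⊤ := by
    simp [hD_def, ENNReal.ofReal_ne_top]
  have hMtop : M ≠ ⊤ := ENNReal.rpow_ne_top_of_nonneg h1p ENNReal.ofReal_ne_top
  have hKtop : K ≠ ⊤ := by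
    refine ENNReal.mul_ne_top (ENNReal.mul_ne_top (ENNReal.mul_ne_top ?_ ?_) ?_) ?_
    · exact ENNReal.rpow_ne_top_of_nonneg hp0.le hDtop
    · exact ENNReal.rpow_ne_top_of_nonneg hp0.le hMtop
    · exact ENNReal.rpow_ne_top_of_nonneg hp0.le (by simp)
    · exact ENNReal.ofReal_ne_top
  have hGtop : G ≠ ⊤ := ENNReal.mul_ne_top ENNReal.ofReal_ne_top ENNReal.ofReal_ne_top
  have hG'top : G' ≠ ⊤ := ENNReal.mul_ne_top hGtop ENNReal.ofReal_ne_top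
  have hC0top : C₀ ≠ ⊤ := by
    refine ENNReal.add_ne_top.2 ⟨ENNReal.one_ne_top, ENNReal.mul_ne_top ?_ hKtop⟩
    exact ENNReal.add_ne_top.2 ⟨hGtop, hG'top⟩
  refine ⟨(C₀ ^ (1 / p)).toReal + 1, by positivity, ?_⟩
  set Ext : (ℝ → E) → ℝ → E :=
    fun u t => if t < T then u t else ((2 * T - min t (2 * T)) / T) • Λ u with hExt_def
  have hExt_lt : ∀ (u : ℝ → E) (t : ℝ), t < T → Ext u t = u t := by
    intro u t ht; simp only [hExt_def, if_pos ht]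
  have hExt_ge : ∀ (u : ℝ → E) (t : ℝ), T ≤ t →
      Ext u t = ((2 * T - min t (2 * T)) / T) • Λ u := by
    intro u t ht; simp only [hExt_def, if_neg (not_lt.2 ht)]
  refine ⟨Ext, ?_, ?_, ?_⟩
  · intro u v; funext t
    by_cases h : t < T <;> simp [hExt_def, h, map_add, smul_add]
  · intro c u; funext t
    by_cases h : t < T
    · simp only [hExt_def, if_pos h, Pi.smul_apply]
    · simp only [hExt_def, if_neg h, Pi.smul_apply, LinearMap.map_smul]
      rw [smul_comm]
  intro u u' hu
  obtain ⟨⟨hum, huI⟩, ⟨hu'm, hu'I⟩, hAC⟩ := hu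
  have hsub : Ioo (T / 2) T ⊆ Ioo 0 T := Ioo_subset_Ioo hT2.le le_rfl
  have haT2 : T / 2 ∈ Ioo 0 T := ⟨hT2, by linarith⟩
  have hu'int : ∀ a ∈ Ioo (0:ℝ) T, IntegrableOn u' (Ioo a T) :=
    fun a ha => aux_integrableOn hp hμ1 ha.1 hu'm hu'I
  have huint : IntegrableOn u (Ioo (T / 2) T) := aux_integrableOn hp hμ1 hT2 hum huI
  have hkey := aux_limit hAC hu'int
  set L : E := u (T / 2) + ∫ t in Ioo (T / 2) T, u' t with hL_def
  have hTend : Tendsto u (𝓝[<] T) (𝓝 L) := hkey (T / 2) haT2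
  have hLam : Λ u = L := hΛspec u L hTend
  have hLa : ∀ a ∈ Ioo (0:ℝ) T, u a + ∫ t in Ioo a T, u' t = L :=
    fun a ha => tendsto_nhds_unique (hkey a ha) hTend
  -- norm bound for L
  set A := ∫ t in Ioo (T / 2) T, ‖u t‖ with hA_def
  set B := ∫ t in Ioo (T / 2) T, ‖u' t‖ with hB_def
  have hApos : 0 ≤ A :=
    setIntegral_nonneg measurableSet_Ioo fun _ _ => norm_nonneg _
  have hBpos : 0 ≤ B :=
    setIntegral_nonneg measurableSet_Ioo fun _ _ => norm_nonneg _
  have hnormL : ‖L‖ ≤ 2 / T * A + B := by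
    have hptwise : ∀ a ∈ Ioo (T / 2) T, ‖L‖ - B ≤ ‖u a‖ := by
      intro a ha
      have ha' : a ∈ Ioo 0 T := hsub ha
      have h1 : L = u a + ∫ t in Ioo a T, u' t := (hLa a ha').symm
      have h2 : ‖∫ t in Ioo a T, u' t‖ ≤ B := by
        refine (norm_integral_le_integral_norm _).trans ?_
        refine setIntegral_mono_set ((hu'int _ haT2).norm) ?_ ?_
        · exact Eventually.of_forall fun t => norm_nonneg _
        · exact HasSubset.Subset.eventuallyLE (Ioo_subset_Ioo ha.1.le le_rfl)
      have h3 : ‖L‖ ≤ ‖u a‖ + ‖∫ t in Ioo a T, u' t‖ := by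
        rw [h1]; exact norm_add_le _ _
      linarith
    have hconst : IntegrableOn (fun _ : ℝ => ‖L‖ - B) (Ioo (T / 2) T) :=
      integrableOn_const measure_Ioo_lt_top.ne
    have hmon := setIntegral_mono_on hconst huint.norm measurableSet_Ioo hptwise
    rw [setIntegral_const, measureReal_def, Real.volume_Ioo, smul_eq_mul,
      ENNReal.toReal_ofReal (by linarith)] at hmon
    have hTT : T - T / 2 = T / 2 := by ring
    rw [hTT] at hmon
    -- hmon : T/2 * (‖L‖ - B) ≤ A
    have h4 : ‖L‖ - B ≤ 2 / T * A := by
      rw [← mul_le_mul_iff_right₀ hT2]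
      calc T / 2 * (‖L‖ - B) ≤ A := hmon
        _ = T / 2 * (2 / T * A) := by field_simp
    linarith
  -- pass to ENNReal
  set Wu := wInt p μ (Ioo 0 T) u with hWu_def
  set Wu' := wInt p μ (Ioo 0 T) u' with hWu'_def
  set W := Wu + Wu' with hW_def
  have hWtop : W ≠ ⊤ := ENNReal.add_ne_top.2 ⟨huI.ne, hu'I.ne⟩
  have hum' : AEStronglyMeasurable u (volume.restrict (Ioo (T / 2) T)) :=
    hum.mono_measure (Measure.restrict_mono hsub le_rfl)
  have hu'm' : AEStronglyMeasurable u' (volume.restrict (Ioo (T / 2) T)) :=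
    hu'm.mono_measure (Measure.restrict_mono hsub le_rfl)
  have hTT : T - T / 2 = T / 2 := by ring
  have hHu : ENNReal.ofReal A ≤ (Ku * Wu) ^ (1 / p) * M := by
    have h0 : ENNReal.ofReal A = ∫⁻ t in Ioo (T / 2) T, ENNReal.ofReal ‖u t‖ := by
      rw [hA_def, ofReal_integral_norm_eq_lintegral_enorm huint]
      exact lintegral_congr fun t => (ofReal_norm_eq_enorm _).symm
    rw [h0]
    have := aux_holder (T := T) hp hμ1 hT2 hum'
    rwa [hTT] at this
  have hHu' : ENNReal.ofReal B ≤ (Ku * Wu') ^ (1 / p) * M := by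
    have h0 : ENNReal.ofReal B = ∫⁻ t in Ioo (T / 2) T, ENNReal.ofReal ‖u' t‖ := by
      rw [hB_def, ofReal_integral_norm_eq_lintegral_enorm (hu'int _ haT2)]
      exact lintegral_congr fun t => (ofReal_norm_eq_enorm _).symm
    rw [h0]
    have := aux_holder (T := T) hp hμ1 hT2 hu'm'
    rwa [hTT] at this
  have hl : ENNReal.ofReal ‖L‖ ≤
      D * ((Ku * Wu) ^ (1 / p) * M + (Ku * Wu') ^ (1 / p) * M) := by
    calc ENNReal.ofReal ‖L‖ ≤ ENNReal.ofReal (2 / T * A + B) :=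
          ENNReal.ofReal_le_ofReal hnormL
      _ ≤ ENNReal.ofReal (2 / T * A) + ENNReal.ofReal B := ENNReal.ofReal_add_le
      _ = ENNReal.ofReal (2 / T) * ENNReal.ofReal A + ENNReal.ofReal B := by
          rw [ENNReal.ofReal_mul (by positivity)]
      _ ≤ D * ((Ku * Wu) ^ (1 / p) * M) + 1 * ((Ku * Wu') ^ (1 / p) * M) := by
          refine add_le_add (mul_le_mul' (le_max_left _ _) hHu) ?_
          rw [one_mul]; exact hHu'
      _ ≤ D * ((Ku * Wu) ^ (1 / p) * M) + D * ((Ku * Wu') ^ (1 / p) * M) := by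
          gcongr
          exact le_max_right _ _
      _ = D * ((Ku * Wu) ^ (1 / p) * M + (Ku * Wu') ^ (1 / p) * M) := (mul_add _ _ _).symm
  have hrproot : ∀ x : ℝ≥0∞, (x ^ (1 / p)) ^ p = x := by
    intro x
    rw [← ENNReal.rpow_mul, one_div_mul_cancel hp0.ne', ENNReal.rpow_one]
  have hlp : ENNReal.ofReal ‖L‖ ^ p ≤ K * W := by
    calc ENNReal.ofReal ‖L‖ ^ p
        ≤ (D * (((Ku * Wu) ^ (1 / p) + (Ku * Wu') ^ (1 / p)) * M)) ^ p := by
          refine ENNReal.rpow_le_rpow ?_ hp0.le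
          rw [add_mul]
          exact hl
      _ = D ^ p * (((Ku * Wu) ^ (1 / p) + (Ku * Wu') ^ (1 / p)) ^ p * M ^ p) := by
          rw [ENNReal.mul_rpow_of_nonneg _ _ hp0.le, ENNReal.mul_rpow_of_nonneg _ _ hp0.le]
      _ ≤ D ^ p * ((2 ^ p * (((Ku * Wu) ^ (1 / p)) ^ p + ((Ku * Wu') ^ (1 / p)) ^ p)) * M ^ p) := by
          gcongr
          exact aux_add_rpow hp0.le _ _
      _ = K * W := by
          rw [hrproot, hrproot, hK_def, hW_def]
          ring
  -- the candidate derivative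
  set V : ℝ → E := fun t => if t < T then u' t
    else if t < 2 * T then (-(1 / T)) • Λ u else 0 with hV_def
  have hV_lt : ∀ t : ℝ, t < T → V t = u' t := by
    intro t ht; simp only [hV_def, if_pos ht]
  -- splitting of the domain
  have hsplit0 : Ioi (0:ℝ) = Ioo 0 T ∪ Ici T := by
    ext t
    simp only [mem_Ioi, mem_union, mem_Ioo, mem_Ici]
    constructor
    · intro h; rcases lt_or_ge t T with h' | h'
      exacts [Or.inl ⟨h, h'⟩, Or.inr h']
    · rintro (⟨h, _⟩ | h)
      exacts [h, lt_of_lt_of_le hT h]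
  have hdisj1 : Disjoint (Ioo (0:ℝ) T) (Ici T) := by
    rw [Set.disjoint_left]
    rintro t ⟨_, h1⟩ h2
    exact absurd h1 (not_lt.2 h2)
  have hsplit2 : Ici T = Ico T (2 * T) ∪ Ici (2 * T) := by
    ext t
    simp only [mem_Ici, mem_union, mem_Ico]
    constructor
    · intro h; rcases lt_or_ge t (2 * T) with h' | h'
      exacts [Or.inl ⟨h, h'⟩, Or.inr h']
    · rintro (⟨h, _⟩ | h)
      exacts [h, by linarith]
  have hdisj2 : Disjoint (Ico T (2 * T)) (Ici (2 * T)) := by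
    rw [Set.disjoint_left]
    rintro t ⟨_, h1⟩ h2
    exact absurd h1 (not_lt.2 h2)
  -- generic tail bound
  have haux_tail : ∀ (g : ℝ → E) (c : ℝ), 0 ≤ c →
      (∀ t ∈ Ico T (2 * T), ‖g t‖ ≤ c) → (∀ t, 2 * T ≤ t → g t = 0) →
      wInt p μ (Ici T) g ≤
        ENNReal.ofReal ((2 * T) ^ e) * ENNReal.ofReal T * ENNReal.ofReal c ^ p := by
    intro g c hc hbound hzero
    simp only [wInt, ← he_def]
    rw [hsplit2, lintegral_union measurableSet_Ici hdisj2]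
    have h0 : ∫⁻ t in Ici (2 * T), ENNReal.ofReal (t ^ e * ‖g t‖ ^ p) = 0 := by
      rw [setLIntegral_congr_fun measurableSet_Ici
        (fun t (ht : 2 * T ≤ t) => ?_), lintegral_zero]
      rw [hzero t ht, norm_zero, Real.zero_rpow hp0.ne', mul_zero, ENNReal.ofReal_zero]
    rw [h0, add_zero]
    calc ∫⁻ t in Ico T (2 * T), ENNReal.ofReal (t ^ e * ‖g t‖ ^ p)
        ≤ ∫⁻ _ in Ico T (2 * T), ENNReal.ofReal ((2 * T) ^ e * c ^ p) := by
          refine setLIntegral_mono' measurableSet_Ico fun t ht => ?_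
          refine ENNReal.ofReal_le_ofReal ?_
          have ht0 : (0:ℝ) ≤ t := le_trans hT.le ht.1
          refine mul_le_mul (Real.rpow_le_rpow ht0 ht.2.le he)
            (Real.rpow_le_rpow (norm_nonneg _) (hbound t ht) hp0.le)
            (Real.rpow_nonneg (norm_nonneg _) _) (Real.rpow_nonneg (by linarith) _)
      _ = ENNReal.ofReal ((2 * T) ^ e) * ENNReal.ofReal T * ENNReal.ofReal c ^ p := by
          rw [setLIntegral_const, Real.volume_Ico,
            ENNReal.ofReal_mul (Real.rpow_nonneg (by linarith) _),
            ← ENNReal.ofReal_rpow_of_nonneg hc hp0.le,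
            show 2 * T - T = T by ring]
          ring
  -- bounds on the two weighted integrals
  have hExtIoo : wInt p μ (Ioo 0 T) (Ext u) = Wu := by
    simp only [wInt, hWu_def]
    refine setLIntegral_congr_fun measurableSet_Ioo (fun t ht => ?_)
    rw [hExt_lt u t ht.2]
  have hVIoo : wInt p μ (Ioo 0 T) V = Wu' := by
    simp only [wInt, hWu'_def]
    refine setLIntegral_congr_fun measurableSet_Ioo (fun t ht => ?_)
    rw [hV_lt t ht.2]
  have hsplitInt : ∀ g : ℝ → E,
      wInt p μ (Ioi 0) g = wInt p μ (Ioo 0 T) g + wInt p μ (Ici T) g := by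
    intro g
    simp only [wInt]
    rw [hsplit0]
    exact lintegral_union measurableSet_Ici hdisj1
  have hExt_norm_le : ∀ t ∈ Ico T (2 * T), ‖Ext u t‖ ≤ ‖L‖ := by
    intro t ht
    rw [hExt_ge u t ht.1, hLam, norm_smul, Real.norm_eq_abs]
    have hφ0 : 0 ≤ (2 * T - min t (2 * T)) / T := by
      refine div_nonneg ?_ hT.le
      have : min t (2 * T) ≤ 2 * T := min_le_right _ _
      linarith
    have hφ1 : (2 * T - min t (2 * T)) / T ≤ 1 := by
      rw [div_le_one hT]
      have : T ≤ min t (2 * T) := le_min ht.1 (by linarith)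
      linarith
    rw [abs_of_nonneg hφ0]
    nlinarith [norm_nonneg L]
  have hExt_zero : ∀ t, 2 * T ≤ t → Ext u t = 0 := by
    intro t ht
    rw [hExt_ge u t (by linarith), min_eq_right ht, sub_self, zero_div, zero_smul]
  have hV_norm_le : ∀ t ∈ Ico T (2 * T), ‖V t‖ ≤ 1 / T * ‖L‖ := by
    intro t ht
    have h1 : ¬ t < T := not_lt.2 ht.1
    simp only [hV_def, if_neg h1, if_pos ht.2, hLam, norm_smul, Real.norm_eq_abs,
      abs_neg, abs_of_nonneg (by positivity : (0:ℝ) ≤ 1 / T)]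
    exact le_rfl
  have hV_zero : ∀ t, 2 * T ≤ t → V t = 0 := by
    intro t ht
    have h1 : ¬ t < T := not_lt.2 (by linarith)
    have h2 : ¬ t < 2 * T := not_lt.2 ht
    simp only [hV_def, if_neg h1, if_neg h2]
  have hWF : wInt p μ (Ioi 0) (Ext u) ≤ Wu + G * ENNReal.ofReal ‖L‖ ^ p := by
    rw [hsplitInt (Ext u), hExtIoo]
    refine add_le_add_right ?_ _
    refine (haux_tail (Ext u) ‖L‖ (norm_nonneg _) hExt_norm_le hExt_zero).trans_eq ?_
    rw [hG_def]
  have hWV : wInt p μ (Ioi 0) V ≤ Wu' + G' * ENNReal.ofReal ‖L‖ ^ p := by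
    rw [hsplitInt V, hVIoo]
    refine add_le_add_right ?_ _
    refine (haux_tail V (1 / T * ‖L‖) (by positivity) hV_norm_le hV_zero).trans_eq ?_
    rw [hG'_def, hG_def, ENNReal.ofReal_mul (by positivity),
      ENNReal.mul_rpow_of_nonneg _ _ hp0.le,
      ← ENNReal.ofReal_rpow_of_nonneg (by positivity) hp0.le]
    ring
  have htotal : wInt p μ (Ioi 0) (Ext u) + wInt p μ (Ioi 0) V ≤ C₀ * W := by
    calc wInt p μ (Ioi 0) (Ext u) + wInt p μ (Ioi 0) V
        ≤ (Wu + G * ENNReal.ofReal ‖L‖ ^ p) + (Wu' + G' * ENNReal.ofReal ‖L‖ ^ p) :=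
          add_le_add hWF hWV
      _ = W + (G + G') * ENNReal.ofReal ‖L‖ ^ p := by rw [hW_def]; ring
      _ ≤ W + (G + G') * (K * W) := by
          refine add_le_add_right (mul_le_mul_right hlp _) _
      _ = C₀ * W := by rw [hC0_def]; ring
  -- measurability
  have hExtm : AEStronglyMeasurable (Ext u) (volume.restrict (Ioi 0)) := by
    rw [hsplit0, Measure.restrict_union hdisj1 measurableSet_Ici]
    refine AEStronglyMeasurable.add_measure ?_ ?_
    · refine hum.congr ?_
      refine (ae_restrict_iff' measurableSet_Ioo).2 (ae_of_all _ fun t ht => ?_)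
      exact (hExt_lt u t ht.2).symm
    · have hg : Continuous fun t : ℝ => ((2 * T - min t (2 * T)) / T) • Λ u :=
        ((continuous_const.sub (continuous_id.min continuous_const)).div_const T).smul
          continuous_const
      refine hg.aestronglyMeasurable.congr ?_
      refine (ae_restrict_iff' measurableSet_Ici).2 (ae_of_all _ fun t ht => ?_)
      exact (hExt_ge u t ht).symm
  have hVm : AEStronglyMeasurable V (volume.restrict (Ioi 0)) := by
    rw [hsplit0, Measure.restrict_union hdisj1 measurableSet_Ici]
    refine AEStronglyMeasurable.add_measure ?_ ?_
    · refine hu'm.congr ?_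
      refine (ae_restrict_iff' measurableSet_Ioo).2 (ae_of_all _ fun t ht => ?_)
      exact (hV_lt t ht.2).symm
    · have hg : StronglyMeasurable ((Iio (2 * T)).indicator
          fun _ : ℝ => (-(1 / T)) • Λ u) :=
        stronglyMeasurable_const.indicator measurableSet_Iio
      refine hg.aestronglyMeasurable.congr ?_
      refine (ae_restrict_iff' measurableSet_Ici).2 (ae_of_all _ fun t ht => ?_)
      have h1 : ¬ t < T := not_lt.2 ht
      simp only [hV_def, if_neg h1, Set.indicator_apply, mem_Iio]
  -- finiteness
  have hKW : K * W ≠ ⊤ := ENNReal.mul_ne_top hKtop hWtop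
  have hlptop : ENNReal.ofReal ‖L‖ ^ p ≠ ⊤ := (hlp.trans_lt (lt_top_iff_ne_top.2 hKW)).ne
  have hWFfin : wInt p μ (Ioi 0) (Ext u) < ⊤ := by
    refine hWF.trans_lt ?_
    exact ENNReal.add_lt_top.2 ⟨huI, ENNReal.mul_lt_top hGtop.lt_top hlptop.lt_top⟩
  have hWVfin : wInt p μ (Ioi 0) V < ⊤ := by
    refine hWV.trans_lt ?_
    exact ENNReal.add_lt_top.2 ⟨hu'I, ENNReal.mul_lt_top hG'top.lt_top hlptop.lt_top⟩
  -- FTC : value at T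
  have hFT : Ext u T = L := by
    rw [hExt_ge u T le_rfl, min_eq_left (by linarith : T ≤ 2 * T), hLam]
    have h1 : (2 * T - T) / T = 1 := by
      rw [show 2 * T - T = T by ring, div_self hT.ne']
    rw [h1, one_smul]
  -- FTC on (a, T]
  have hii : ∀ a ∈ Ioo (0:ℝ) T,
      IntegrableOn V (Ioo a T) ∧ Ext u T - Ext u a = ∫ t in Ioo a T, V t := by
    intro a ha
    have hveq : EqOn u' V (Ioo a T) := fun t ht => (hV_lt t ht.2).symm
    constructor
    · exact (hu'int a ha).congr_fun hveq measurableSet_Ioo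
    · rw [hFT, hExt_lt u a ha.2, ← setIntegral_congr_fun measurableSet_Ioo hveq,
        ← hLa a ha]
      abel
  -- FTC on [T, ∞)
  have hi : ∀ a b : ℝ, T ≤ a → a ≤ b →
      IntegrableOn V (Ioo a b) ∧ Ext u b - Ext u a = ∫ t in Ioo a b, V t := by
    intro a b hTa hab
    set g' : ℝ → E := (Iio (2 * T)).indicator fun _ => (-(1 / T)) • L with hg'_def
    have hveq : EqOn V g' (Ioo a b) := by
      intro t ht
      have h1 : ¬ t < T := not_lt.2 (hTa.trans ht.1.le)
      simp only [hV_def, hg'_def, if_neg h1, hLam, Set.indicator_apply, mem_Iio]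
    have hg'int : IntegrableOn g' (Ioo a b) := by
      exact (integrableOn_const measure_Ioo_lt_top.ne).indicator measurableSet_Iio
    constructor
    · exact hg'int.congr_fun (fun t ht => (hveq ht).symm) measurableSet_Ioo
    · rw [setIntegral_congr_fun measurableSet_Ioo hveq, hg'_def,
        setIntegral_indicator measurableSet_Iio, Ioo_inter_Iio, setIntegral_const,
        measureReal_def, Real.volume_Ioo, hExt_ge u b (hTa.trans hab), hExt_ge u a hTa, hLam, ← sub_smul,
        smul_smul, ENNReal.toReal_ofReal']
      congr 1
      rcases le_or_gt a (2 * T) with h3 | h3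
      · have hmina : min a (2 * T) = a := min_eq_left h3
        have h4 : a ≤ min b (2 * T) := le_min hab h3
        rw [hmina, max_eq_left (by linarith)]
        field_simp
        ring
      · have h5 : min a (2 * T) = 2 * T := min_eq_right h3.le
        have h6 : min b (2 * T) = 2 * T := min_eq_right (by linarith)
        rw [h5, h6, max_eq_right (by linarith)]
        simp
  -- local absolute continuity
  have hLoc : LocAC (Ioi 0) (Ext u) V := by
    intro a b ha hb hab
    rw [mem_Ioi] at ha hb
    rcases lt_or_ge a T with haT | haT
    · rcases lt_or_ge b T with hbT | hbT
      · obtain ⟨h1, h2⟩ := hAC a b ⟨ha, haT⟩ ⟨hb, hbT⟩ hab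
        have hveq : EqOn u' V (Ioo a b) := fun t ht => (hV_lt t (ht.2.trans hbT)).symm
        refine ⟨h1.congr_fun hveq measurableSet_Ioo, ?_⟩
        rw [hExt_lt u a haT, hExt_lt u b hbT, h2]
        exact setIntegral_congr_fun measurableSet_Ioo hveq
      · obtain ⟨I1, E1⟩ := hii a ⟨ha, haT⟩
        obtain ⟨I2, E2⟩ := hi T b le_rfl hbT
        have hunion : Ioo a b = Ioo a T ∪ Ico T b := by
          ext t
          simp only [mem_Ioo, mem_union, mem_Ico]
          constructor
          · rintro ⟨h1, h2⟩; rcases lt_or_ge t T with h3 | h3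
            exacts [Or.inl ⟨h1, h3⟩, Or.inr ⟨h3, h2⟩]
          · rintro (⟨h1, h2⟩ | ⟨h1, h2⟩)
            exacts [⟨h1, h2.trans_le hbT⟩, ⟨haT.trans_le h1, h2⟩]
        have hdisj : Disjoint (Ioo a T) (Ico T b) := by
          rw [Set.disjoint_left]
          rintro t ⟨_, h1⟩ ⟨h2, _⟩
          exact absurd h1 (not_lt.2 h2)
        have I2' : IntegrableOn V (Ico T b) := by
          rw [integrableOn_Ico_iff_integrableOn_Ioo]
          exact I2
        refine ⟨by rw [hunion]; exact I1.union I2', ?_⟩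
        rw [hunion, setIntegral_union hdisj measurableSet_Ico I1 I2',
          integral_Ico_eq_integral_Ioo, ← E1, ← E2]
        abel
    · exact hi a b haT hab
  -- conclusion
  refine ⟨V, ⟨⟨hExtm, hWFfin⟩, ⟨hVm, hWVfin⟩, hLoc⟩, fun t ht => hExt_lt u t ht.2, ?_⟩
  have hC : C₀ ^ (1 / p) ≤ ENNReal.ofReal ((C₀ ^ (1 / p)).toReal + 1) := by
    have hfin : C₀ ^ (1 / p) ≠ ⊤ := ENNReal.rpow_ne_top_of_nonneg (by positivity) hC0top
    rw [ENNReal.ofReal_add ENNReal.toReal_nonneg zero_le_one, ENNReal.ofReal_toReal hfin]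
    exact le_self_add
  calc (wInt p μ (Ioi 0) (Ext u) + wInt p μ (Ioi 0) V) ^ (1 / p)
      ≤ (C₀ * W) ^ (1 / p) := ENNReal.rpow_le_rpow htotal (by positivity)
    _ = C₀ ^ (1 / p) * W ^ (1 / p) := ENNReal.mul_rpow_of_nonneg _ _ (by positivity)
    _ ≤ ENNReal.ofReal ((C₀ ^ (1 / p)).toReal + 1) * W ^ (1 / p) :=
        mul_le_mul_left hC _
end
end

section
/- Let E be a Banach space, p ∈ (1,∞), and μ ∈ (1/p,1]. For every u ∈ L_{p,μ}((0,∞);E) one has lim_{h→0+} ∫_0^∞ t^{p(1−μ)} ‖u(t+h) − u(t)‖_E^p dt = 0. That is, the semigroup of left translations is strongly continuous on L_{p,μ}((0,∞);E). -/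
set_option maxHeartbeats 1000000


open MeasureTheory Set Filter Topology
open scoped ENNReal NNReal

noncomputable section

/-- `(a+b)^p ≤ 2^p * (a^p + b^p)` in `ℝ≥0∞`. -/
lemma stmt10_add_rpow {p : ℝ} (hp : 0 ≤ p) (a b : ℝ≥0∞) :
    (a + b) ^ p ≤ 2 ^ p * (a ^ p + b ^ p) := by
  have h1 : a + b ≤ 2 * (a ⊔ b) := by
    rw [two_mul]; exact add_le_add le_sup_left le_sup_right
  calc (a + b) ^ p ≤ (2 * (a ⊔ b)) ^ p := ENNReal.rpow_le_rpow h1 hp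
    _ = 2 ^ p * (a ⊔ b) ^ p := ENNReal.mul_rpow_of_nonneg _ _ hp
    _ ≤ 2 ^ p * (a ^ p + b ^ p) := by
        gcongr
        rcases le_total a b with hab | hab
        · rw [sup_eq_right.2 hab]; exact self_le_add_left _ _
        · rw [sup_eq_left.2 hab]; exact self_le_add_right _ _

/-- Key pointwise identity relating the weighted integrand to the norm of `t^(1-μ) • v`. -/
lemma stmt10_key {E : Type*} [NormedAddCommGroup E] [NormedSpace ℝ E] {p μ : ℝ} (hp0 : 0 < p)
    {t : ℝ} (ht : 0 < t) (v : E) :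
    ENNReal.ofReal (t ^ (p * (1 - μ)) * ‖v‖ ^ p) = (‖t ^ (1 - μ) • v‖₊ : ℝ≥0∞) ^ p := by
  have h1 : ‖t ^ (1 - μ) • v‖ = t ^ (1 - μ) * ‖v‖ := by
    rw [norm_smul, Real.norm_eq_abs, abs_of_nonneg (Real.rpow_nonneg ht.le _)]
  rw [← enorm_eq_nnnorm, ← ofReal_norm, h1,
    ENNReal.ofReal_rpow_of_nonneg (mul_nonneg (Real.rpow_nonneg ht.le _) (norm_nonneg _)) hp0.le,
    Real.mul_rpow (Real.rpow_nonneg ht.le _) (norm_nonneg _), mul_comm p, Real.rpow_mul ht.le]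

theorem stmt10_aux {E : Type*} [NormedAddCommGroup E] [NormedSpace ℝ E]
    (p μ : ℝ) (hp : 1 < p) (hμ1 : μ ≤ 1)
    (u : ℝ → E) (hum : StronglyMeasurable u)
    (hui : (∫⁻ t in Ioi (0 : ℝ), ENNReal.ofReal (t ^ (p * (1 - μ)) * ‖u t‖ ^ p)) < ⊤) :
    Tendsto
      (fun h : ℝ =>
        ∫⁻ t in Ioi (0 : ℝ), ENNReal.ofReal (t ^ (p * (1 - μ)) * ‖u (t + h) - u t‖ ^ p))
      (nhdsWithin 0 (Ioi 0)) (nhds 0) := by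
  have hp0 : (0 : ℝ) < p := lt_trans one_pos hp
  have hpne : p ≠ 0 := hp0.ne'
  have hβ : (0 : ℝ) ≤ 1 - μ := by linarith
  set P : ℝ≥0∞ := ENNReal.ofReal p with hP
  haveI : Fact (1 ≤ P) := ⟨ENNReal.one_le_ofReal.mpr hp.le⟩
  have hPne0 : P ≠ 0 := by simp [hP, hp0]
  have hPnetop : P ≠ ⊤ := ENNReal.ofReal_ne_top
  have hPtoReal : P.toReal = p := ENNReal.toReal_ofReal hp0.le
  set g : ℝ → E := (Ioi (0 : ℝ)).indicator (fun t => t ^ (1 - μ) • u t) with hgdef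
  have hrm : Measurable fun t : ℝ => t ^ (1 - μ) := by fun_prop
  have hgm : StronglyMeasurable g :=
    (hrm.stronglyMeasurable.smul hum).indicator measurableSet_Ioi
  -- pointwise value of ‖g‖ₑ^p
  have hgnorm : ∀ t : ℝ, (‖g t‖₊ : ℝ≥0∞) ^ p =
      (Ioi (0 : ℝ)).indicator (fun t => ENNReal.ofReal (t ^ (p * (1 - μ)) * ‖u t‖ ^ p)) t := by
    intro t
    by_cases ht : t ∈ Ioi (0 : ℝ)
    · rw [indicator_of_mem ht, hgdef, indicator_of_mem ht]
      exact (stmt10_key hp0 ht _).symm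
    · rw [indicator_of_notMem ht, hgdef, indicator_of_notMem ht]
      simp [ENNReal.zero_rpow_of_pos hp0]
  have hgint : (∫⁻ t, (‖g t‖₊ : ℝ≥0∞) ^ p) =
      ∫⁻ t in Ioi (0 : ℝ), ENNReal.ofReal (t ^ (p * (1 - μ)) * ‖u t‖ ^ p) := by
    simp_rw [hgnorm]
    exact lintegral_indicator measurableSet_Ioi _
  have hgLp : MemLp g P volume := by
    refine ⟨hgm.aestronglyMeasurable, ?_⟩
    rw [eLpNorm_eq_lintegral_rpow_enorm_toReal hPne0 hPnetop, hPtoReal]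
    exact ENNReal.rpow_lt_top_of_nonneg (by positivity) (by have hh := hui.ne; rw [← hgint] at hh; exact hh)
  -- For every function f, eLpNorm f P volume ^ p is the p-th power lintegral
  have heq : ∀ f : ℝ → E, eLpNorm f P volume ^ p = ∫⁻ t, (‖f t‖₊ : ℝ≥0∞) ^ p := by
    intro f
    rw [eLpNorm_eq_lintegral_rpow_enorm_toReal hPne0 hPnetop, hPtoReal, ← ENNReal.rpow_mul,
      one_div_mul_cancel hpne, ENNReal.rpow_one]
    rfl
  -- translation continuity in unweighted Lp
  set G : Lp E P volume := hgLp.toLp g with hGdef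
  set cm : ℝ → C(ℝ, ℝ) := fun h => ⟨fun t => t + h, by continuity⟩ with hcmdef
  have hcm : Continuous cm :=
    ContinuousMap.continuous_of_continuous_uncurry _ (by exact continuous_snd.add continuous_fst)
  have hmp : ∀ h : ℝ, MeasurePreserving (cm h) volume volume := fun h =>
    measurePreserving_add_right volume h
  set T : ℝ → Lp E P volume := fun h => Lp.compMeasurePreserving (cm h) (hmp h) G with hTdef
  have hT : Tendsto T (𝓝[>] (0 : ℝ)) (𝓝 (T 0)) :=
    Filter.Tendsto.compMeasurePreservingLp tendsto_const_nhds
      ((hcm.tendsto 0).mono_left nhdsWithin_le_nhds) hmp (hmp 0) hPnetop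
  have hTe : Tendsto (fun h => eLpNorm (⇑(T h) - ⇑(T 0)) P volume) (𝓝[>] (0 : ℝ)) (𝓝 0) :=
    (Lp.tendsto_Lp_iff_tendsto_eLpNorm' _ _).mp hT
  have hTcoe : ∀ h : ℝ, ⇑(T h) =ᵐ[volume] fun t => g (t + h) := by
    intro h
    refine (Lp.coeFn_compMeasurePreserving G (hmp h)).trans ?_
    have h2 : ⇑G ∘ (cm h) =ᵐ[volume] g ∘ (cm h) :=
      ae_eq_comp (measurable_id.add_const h).aemeasurable
        (by rw [(hmp h).map_eq]; exact hgLp.coeFn_toLp)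
    exact h2
  have hcongr : ∀ h : ℝ, eLpNorm (⇑(T h) - ⇑(T 0)) P volume
      = eLpNorm (fun t => g (t + h) - g t) P volume := by
    intro h
    refine eLpNorm_congr_ae ?_
    filter_upwards [hTcoe h, hTcoe 0] with t h1 h2
    simp only [Pi.sub_apply, h1, h2, add_zero]
  have hA : Tendsto (fun h : ℝ => eLpNorm (fun t => g (t + h) - g t) P volume ^ p)
      (𝓝[>] (0 : ℝ)) (𝓝 0) := by
    have hc := (ENNReal.continuous_rpow_const (y := p)).tendsto 0
    have h2 := hc.comp (hTe.congr hcongr)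
    simpa [Function.comp_def, ENNReal.zero_rpow_of_pos hp0] using h2
  -- the weight-mismatch term, via dominated convergence
  set F : ℝ → ℝ → ℝ≥0∞ := fun h s =>
    ENNReal.ofReal ((1 - (max ((s - h) / s) 0) ^ (1 - μ)) ^ p) * (‖g s‖₊ : ℝ≥0∞) ^ p with hFdef
  have hgmeas : Measurable fun s : ℝ => (‖g s‖₊ : ℝ≥0∞) ^ p :=
    (ENNReal.continuous_rpow_const).measurable.comp hgm.enorm
  have hgfin : (∫⁻ s in Ioi (0 : ℝ), (‖g s‖₊ : ℝ≥0∞) ^ p) ≠ ⊤ := by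
    refine ne_of_lt (lt_of_le_of_lt (setLIntegral_le_lintegral _ _) ?_)
    rw [hgint]; exact hui
  have hB : Tendsto (fun h : ℝ => ∫⁻ s in Ioi (0 : ℝ), F h s) (𝓝[>] (0 : ℝ)) (𝓝 0) := by
    have h0 : (0 : ℝ≥0∞) = ∫⁻ _ in Ioi (0 : ℝ), (0 : ℝ≥0∞) := by simp
    rw [h0]
    refine tendsto_lintegral_filter_of_dominated_convergence
      (fun s => (‖g s‖₊ : ℝ≥0∞) ^ p) ?_ ?_ hgfin ?_
    · refine Eventually.of_forall fun h => ?_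
      refine Measurable.mul ?_ hgmeas
      refine ENNReal.measurable_ofReal.comp ?_
      fun_prop
    · filter_upwards [self_mem_nhdsWithin] with h hh
      filter_upwards [ae_restrict_mem measurableSet_Ioi] with s hs
      have hh' : (0 : ℝ) < h := hh
      have hs' : (0 : ℝ) < s := hs
      have hm0 : 0 ≤ max ((s - h) / s) 0 := le_max_right _ _
      have hm1 : max ((s - h) / s) 0 ≤ 1 := by
        rw [max_le_iff]
        constructor
        · rw [div_le_one hs']; linarith
        · norm_num
      have hle1 : (1 - (max ((s - h) / s) 0) ^ (1 - μ)) ^ p ≤ 1 := by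
        refine Real.rpow_le_one ?_ ?_ hp0.le
        · have := Real.rpow_le_one hm0 hm1 hβ; linarith
        · have := Real.rpow_nonneg hm0 (1 - μ); linarith
      calc F h s ≤ 1 * (‖g s‖₊ : ℝ≥0∞) ^ p := by
            refine mul_le_mul_left ?_ _
            calc ENNReal.ofReal ((1 - (max ((s - h) / s) 0) ^ (1 - μ)) ^ p)
                ≤ ENNReal.ofReal 1 := ENNReal.ofReal_le_ofReal hle1
              _ = 1 := ENNReal.ofReal_one
        _ = (‖g s‖₊ : ℝ≥0∞) ^ p := one_mul _
    · have hfin : ∀ᵐ s ∂(volume.restrict (Ioi (0 : ℝ))), (‖g s‖₊ : ℝ≥0∞) ^ p < ⊤ :=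
        ae_lt_top hgmeas hgfin
      filter_upwards [ae_restrict_mem measurableSet_Ioi, hfin] with s hs hsfin
      have hs' : (0 : ℝ) < s := hs
      have hc : Tendsto (fun h : ℝ => ENNReal.ofReal
          ((1 - (max ((s - h) / s) 0) ^ (1 - μ)) ^ p)) (𝓝[>] (0 : ℝ)) (𝓝 0) := by
        have c1 : Tendsto (fun h : ℝ => (s - h) / s) (𝓝 0) (𝓝 1) := by
          have hcont : Continuous fun h : ℝ => (s - h) / s := by fun_prop
          have := hcont.tendsto 0
          simpa [div_self hs'.ne'] using this
        have c2 : Tendsto (fun h : ℝ => max ((s - h) / s) 0) (𝓝 0) (𝓝 1) := by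
          have := c1.max (tendsto_const_nhds (x := (0 : ℝ)))
          simpa using this
        have c3 : Tendsto (fun h : ℝ => (max ((s - h) / s) 0) ^ (1 - μ)) (𝓝 0) (𝓝 1) := by
          have := c2.rpow_const (p := 1 - μ) (Or.inl one_ne_zero)
          simpa [Real.one_rpow] using this
        have c4 : Tendsto (fun h : ℝ => 1 - (max ((s - h) / s) 0) ^ (1 - μ)) (𝓝 0) (𝓝 0) := by
          have := (tendsto_const_nhds (x := (1 : ℝ))).sub c3
          simpa using this
        have c5 : Tendsto (fun h : ℝ => (1 - (max ((s - h) / s) 0) ^ (1 - μ)) ^ p)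
            (𝓝 0) (𝓝 0) := by
          have := c4.rpow_const (p := p) (Or.inr hp0.le)
          simpa [Real.zero_rpow hpne] using this
        have c6 := (ENNReal.continuous_ofReal.tendsto 0).comp c5
        simpa [Function.comp_def] using c6.mono_left nhdsWithin_le_nhds
      have := ENNReal.Tendsto.mul_const hc (Or.inr hsfin.ne)
      simpa using this
  -- the pointwise bound
  have hbound : ∀ᶠ h in 𝓝[>] (0 : ℝ),
      (∫⁻ t in Ioi (0 : ℝ), ENNReal.ofReal (t ^ (p * (1 - μ)) * ‖u (t + h) - u t‖ ^ p))
        ≤ 2 ^ p * (eLpNorm (fun t => g (t + h) - g t) P volume ^ p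
            + ∫⁻ s in Ioi (0 : ℝ), F h s) := by
    filter_upwards [self_mem_nhdsWithin] with h hh
    have hh' : (0 : ℝ) < h := hh
    have step1 : ∀ t ∈ Ioi (0 : ℝ),
        ENNReal.ofReal (t ^ (p * (1 - μ)) * ‖u (t + h) - u t‖ ^ p)
          ≤ 2 ^ p * ((‖g (t + h) - g t‖₊ : ℝ≥0∞) ^ p + F h (t + h)) := by
      intro t ht
      have ht' : (0 : ℝ) < t := ht
      have htph : (0 : ℝ) < t + h := by linarith
      have hgt : g t = t ^ (1 - μ) • u t := indicator_of_mem ht _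
      have hgth : g (t + h) = (t + h) ^ (1 - μ) • u (t + h) :=
        indicator_of_mem (by exact htph) _
      have hid : (t : ℝ) ^ (1 - μ) • (u (t + h) - u t)
          = (g (t + h) - g t) + ((t / (t + h)) ^ (1 - μ) - 1) • g (t + h) := by
        have hc : (t / (t + h)) ^ (1 - μ) = t ^ (1 - μ) / (t + h) ^ (1 - μ) :=
          Real.div_rpow ht'.le htph.le _
        rw [hgt, hgth, smul_sub, hc, sub_smul, smul_smul,
          div_mul_cancel₀ _ (ne_of_gt (Real.rpow_pos_of_pos htph _)), one_smul]
        abel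
      have hxle : (t / (t + h)) ^ (1 - μ) ≤ 1 :=
        Real.rpow_le_one (div_nonneg ht'.le htph.le)
          ((div_le_one htph).2 (by linarith)) hβ
      have habs : |(t / (t + h)) ^ (1 - μ) - 1| = 1 - (t / (t + h)) ^ (1 - μ) := by
        rw [abs_of_nonpos (by linarith)]; ring
      have hsecond : (‖((t / (t + h)) ^ (1 - μ) - 1) • g (t + h)‖₊ : ℝ≥0∞) ^ p = F h (t + h) := by
        have hmax : max ((t + h - h) / (t + h)) 0 = t / (t + h) := by
          rw [add_sub_cancel_right, max_eq_left (div_nonneg ht'.le htph.le)]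
        rw [hFdef]
        simp only [hmax]
        rw [nnnorm_smul, ENNReal.coe_mul,
          ENNReal.mul_rpow_of_nonneg _ _ hp0.le, ← enorm_eq_nnnorm ((t / (t + h)) ^ (1 - μ) - 1), Real.enorm_eq_ofReal_abs, habs,
          ENNReal.ofReal_rpow_of_nonneg (by linarith [hxle]) hp0.le]
      calc ENNReal.ofReal (t ^ (p * (1 - μ)) * ‖u (t + h) - u t‖ ^ p)
          = (‖t ^ (1 - μ) • (u (t + h) - u t)‖₊ : ℝ≥0∞) ^ p := stmt10_key hp0 ht' _
        _ = (‖(g (t + h) - g t) + ((t / (t + h)) ^ (1 - μ) - 1) • g (t + h)‖₊ : ℝ≥0∞) ^ p := by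
            rw [hid]
        _ ≤ ((‖g (t + h) - g t‖₊ : ℝ≥0∞)
              + (‖((t / (t + h)) ^ (1 - μ) - 1) • g (t + h)‖₊ : ℝ≥0∞)) ^ p := by
            refine ENNReal.rpow_le_rpow ?_ hp0.le
            rw [← ENNReal.coe_add]
            exact_mod_cast nnnorm_add_le _ _
        _ ≤ 2 ^ p * ((‖g (t + h) - g t‖₊ : ℝ≥0∞) ^ p
              + (‖((t / (t + h)) ^ (1 - μ) - 1) • g (t + h)‖₊ : ℝ≥0∞) ^ p) :=
            stmt10_add_rpow hp0.le _ _
        _ = 2 ^ p * ((‖g (t + h) - g t‖₊ : ℝ≥0∞) ^ p + F h (t + h)) := by rw [hsecond]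
    have hFm : Measurable (F h) := by
      refine Measurable.mul ?_ hgmeas
      refine ENNReal.measurable_ofReal.comp ?_
      fun_prop
    have hmeas2 : Measurable fun t : ℝ =>
        2 ^ p * ((‖g (t + h) - g t‖₊ : ℝ≥0∞) ^ p + F h (t + h)) := by
      have m1 : Measurable fun t : ℝ => (‖g (t + h) - g t‖₊ : ℝ≥0∞) ^ p :=
        (ENNReal.continuous_rpow_const).measurable.comp
          ((hgm.comp_measurable (measurable_id.add_const h)).sub hgm).enorm
      exact (m1.add (hFm.comp (measurable_id.add_const h))).const_mul _
    calc (∫⁻ t in Ioi (0 : ℝ), ENNReal.ofReal (t ^ (p * (1 - μ)) * ‖u (t + h) - u t‖ ^ p))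
        ≤ ∫⁻ t in Ioi (0 : ℝ), 2 ^ p * ((‖g (t + h) - g t‖₊ : ℝ≥0∞) ^ p + F h (t + h)) :=
          setLIntegral_mono hmeas2 step1
      _ = 2 ^ p * ((∫⁻ t in Ioi (0 : ℝ), (‖g (t + h) - g t‖₊ : ℝ≥0∞) ^ p)
            + ∫⁻ t in Ioi (0 : ℝ), F h (t + h)) := by
          rw [lintegral_const_mul _ (by
            have m1 : Measurable fun t : ℝ => (‖g (t + h) - g t‖₊ : ℝ≥0∞) ^ p :=
              (ENNReal.continuous_rpow_const).measurable.comp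
                ((hgm.comp_measurable (measurable_id.add_const h)).sub hgm).enorm
            exact m1.add (hFm.comp (measurable_id.add_const h))),
            lintegral_add_left (by
              exact (ENNReal.continuous_rpow_const).measurable.comp
                ((hgm.comp_measurable (measurable_id.add_const h)).sub hgm).enorm)]
      _ ≤ 2 ^ p * (eLpNorm (fun t => g (t + h) - g t) P volume ^ p
            + ∫⁻ s in Ioi (0 : ℝ), F h s) := by
          refine mul_le_mul_right (add_le_add ?_ ?_) _
          · rw [heq]
            exact setLIntegral_le_lintegral _ _
          · have hpre : (fun t : ℝ => t + h) ⁻¹' (Ioi h) = Ioi (0 : ℝ) := by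
              ext x; simp
            have heq2 : (∫⁻ t in Ioi (0 : ℝ), F h (t + h)) = ∫⁻ s in Ioi h, F h s := by
              rw [← hpre]
              exact (measurePreserving_add_right volume h).setLIntegral_comp_preimage_emb
                (measurableEmbedding_addRight h) (F h) (Ioi h)
            rw [heq2]
            exact lintegral_mono_set (Ioi_subset_Ioi hh'.le)
  -- squeeze
  have hM : Tendsto (fun h : ℝ => 2 ^ p * (eLpNorm (fun t => g (t + h) - g t) P volume ^ p
      + ∫⁻ s in Ioi (0 : ℝ), F h s)) (𝓝[>] (0 : ℝ)) (𝓝 0) := by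
    have h2top : (2 : ℝ≥0∞) ^ p ≠ ⊤ := by
      exact ENNReal.rpow_ne_top_of_nonneg hp0.le ENNReal.ofNat_ne_top
    have := ENNReal.Tendsto.const_mul (hA.add hB) (Or.inr h2top)
    simpa using this
  exact tendsto_of_tendsto_of_tendsto_of_le_of_le' tendsto_const_nhds hM
    (Eventually.of_forall fun h => zero_le) hbound

/-- Strong continuity of the left-translation semigroup on
`L_{p,μ}((0,∞);E)`. -/
theorem stmt_10 {E : Type*} [NormedAddCommGroup E] [NormedSpace ℝ E] [CompleteSpace E]
    (p μ : ℝ) (hp : 1 < p) (hμ : 1 / p < μ) (hμ1 : μ ≤ 1)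
    (u : ℝ → E) (hu : MemWLp p μ (Ioi 0) u) :
    Tendsto
      (fun h : ℝ =>
        ∫⁻ t in Ioi (0 : ℝ), ENNReal.ofReal (t ^ (p * (1 - μ)) * ‖u (t + h) - u t‖ ^ p))
      (nhdsWithin 0 (Ioi 0)) (nhds 0) := by
  obtain ⟨hum, hui⟩ := hu
  set v : ℝ → E := hum.mk u with hvdef
  have hsm : StronglyMeasurable v := hum.stronglyMeasurable_mk
  have hae : ∀ᵐ t ∂(volume.restrict (Ioi (0 : ℝ))), u t = v t := hum.ae_eq_mk
  have hae' : ∀ᵐ t ∂(volume : Measure ℝ), t ∈ Ioi (0 : ℝ) → u t = v t :=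
    (ae_restrict_iff' measurableSet_Ioi).mp hae
  have hint : (∫⁻ t in Ioi (0 : ℝ), ENNReal.ofReal (t ^ (p * (1 - μ)) * ‖v t‖ ^ p)) < ⊤ := by
    refine lt_of_eq_of_lt (lintegral_congr_ae ?_) hui
    filter_upwards [hae] with t ht
    rw [ht]
  have main := stmt10_aux p μ hp hμ1 v hsm hint
  refine main.congr' ?_
  filter_upwards [self_mem_nhdsWithin] with h hh
  have hh' : (0 : ℝ) < h := hh
  have hshift : ∀ᵐ t ∂(volume : Measure ℝ), (t + h) ∈ Ioi (0 : ℝ) → u (t + h) = v (t + h) := by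
    rw [ae_iff] at hae' ⊢
    have hpre : {a : ℝ | ¬((a + h) ∈ Ioi (0 : ℝ) → u (a + h) = v (a + h))}
        = (fun a : ℝ => a + h) ⁻¹' {a : ℝ | ¬(a ∈ Ioi (0 : ℝ) → u a = v a)} := rfl
    rw [hpre, (measurePreserving_add_right volume h).measure_preimage_emb
      (measurableEmbedding_addRight h)]
    exact hae'
  refine lintegral_congr_ae ?_
  filter_upwards [ae_restrict_mem measurableSet_Ioi, ae_restrict_of_ae hshift,
    ae_restrict_of_ae hae'] with t ht h1 h2
  have ht' : (0 : ℝ) < t := ht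
  rw [h2 ht, h1 (by simp only [mem_Ioi]; linarith)]
end
end

section
/- Let E be a Banach space, p ∈ (1,∞), and μ ∈ (1/p,1]. For every f ∈ L_{p,μ}((0,∞);E), the function u(t) = ∫_0^∞ e^{−s} f(t+s) ds is well defined as a Bochner integral for a.e. t > 0, belongs to W^1_{p,μ}((0,∞);E), satisfies u(t) − u'(t) = f(t) for a.e. t, and obeys ‖u‖_{L_{p,μ}((0,∞);E)} ≤ ‖f‖_{L_{p,μ}((0,∞);E)}. Moreover u is the unique element of W^1_{p,μ}((0,∞);E) with u − u' = f a.e.; in particular 1 − ∂_t : W^1_{p,μ}((0,∞);E) → L_{p,μ}((0,∞);E) is bijective. -/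
open MeasureTheory Set Filter Topology
open scoped ENNReal NNReal

noncomputable section

section Helpers

variable {E : Type*} [NormedAddCommGroup E]

lemma map_restrict_Ioi (t : ℝ) :
    Measure.map (fun s : ℝ => s + t) (volume.restrict (Ioi (0:ℝ))) = volume.restrict (Ioi t) := by
  have h := Measure.restrict_map (μ := (volume : Measure ℝ)) (f := fun s : ℝ => s + t)
      (measurable_add_const t) (measurableSet_Ioi (a := t))
  rw [map_add_right_eq_self volume t] at h
  have hpre : ((fun s : ℝ => s + t) ⁻¹' Ioi t) = Ioi (0:ℝ) := by
    ext x; simp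
  rw [hpre] at h
  exact h.symm

lemma addRight_embedding (t : ℝ) : MeasurableEmbedding (fun s : ℝ => s + t) :=
  (MeasurableEquiv.addRight t).measurableEmbedding

lemma wInt_aemeas (p μ : ℝ) {v : ℝ → E}
    (hv : AEStronglyMeasurable v (volume.restrict (Ioi 0))) :
    AEMeasurable (fun t => ENNReal.ofReal (t ^ (p * (1 - μ)) * ‖v t‖ ^ p))
      (volume.restrict (Ioi 0)) := by
  apply ENNReal.measurable_ofReal.comp_aemeasurable
  exact ((measurable_id.pow_const _).aemeasurable).mul
    (hv.norm.aemeasurable.pow_const _)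

lemma wInt_congr_ae (p μ : ℝ) {v w : ℝ → E}
    (h : v =ᵐ[volume.restrict (Ioi 0)] w) : wInt p μ (Ioi 0) v = wInt p μ (Ioi 0) w := by
  refine lintegral_congr_ae ?_
  filter_upwards [h] with t ht
  rw [ht]

lemma wInt_sub_le {p μ : ℝ} (hp : 0 ≤ p) (v w : ℝ → E)
    (hv : AEStronglyMeasurable v (volume.restrict (Ioi 0)))
    (hw : AEStronglyMeasurable w (volume.restrict (Ioi 0))) :
    wInt p μ (Ioi 0) (fun t => v t - w t) ≤
      ENNReal.ofReal (2 ^ p) * (wInt p μ (Ioi 0) v + wInt p μ (Ioi 0) w) := by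
  have two_rpow_bound : ∀ {x y : ℝ}, 0 ≤ x → 0 ≤ y →
      (x + y) ^ p ≤ 2 ^ p * (x ^ p + y ^ p) := by
    intro x y hx hy
    have h1 : x + y ≤ 2 * max x y := by
      rcases le_total x y with h | h
      · simp [max_eq_right h]; linarith
      · simp [max_eq_left h]; linarith
    calc (x + y) ^ p ≤ (2 * max x y) ^ p := Real.rpow_le_rpow (by linarith) h1 hp
      _ = 2 ^ p * (max x y) ^ p := Real.mul_rpow (by norm_num) (le_max_of_le_left hx)
      _ ≤ 2 ^ p * (x ^ p + y ^ p) := by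
          gcongr
          rcases le_total x y with h | h
          · rw [max_eq_right h]; exact le_add_of_nonneg_left (Real.rpow_nonneg hx _)
          · rw [max_eq_left h]; exact le_add_of_nonneg_right (Real.rpow_nonneg hy _)
  calc wInt p μ (Ioi 0) (fun t => v t - w t)
      ≤ ∫⁻ t in Ioi 0, ENNReal.ofReal (2 ^ p) *
        (ENNReal.ofReal (t ^ (p * (1 - μ)) * ‖v t‖ ^ p) +
         ENNReal.ofReal (t ^ (p * (1 - μ)) * ‖w t‖ ^ p)) := by
        refine lintegral_mono_ae ?_
        filter_upwards [self_mem_ae_restrict measurableSet_Ioi] with t ht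
        have ht0 : (0:ℝ) < t := ht
        have hte : 0 ≤ t ^ (p * (1 - μ)) := Real.rpow_nonneg ht0.le _
        have key : t ^ (p * (1 - μ)) * ‖v t - w t‖ ^ p ≤
            2 ^ p * (t ^ (p * (1 - μ)) * ‖v t‖ ^ p + t ^ (p * (1 - μ)) * ‖w t‖ ^ p) := by
          have h1 : ‖v t - w t‖ ^ p ≤ (‖v t‖ + ‖w t‖) ^ p :=
            Real.rpow_le_rpow (norm_nonneg _) (norm_sub_le _ _) hp
          have h2 := two_rpow_bound (norm_nonneg (v t)) (norm_nonneg (w t))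
          calc t ^ (p * (1 - μ)) * ‖v t - w t‖ ^ p
              ≤ t ^ (p * (1 - μ)) * (2 ^ p * (‖v t‖ ^ p + ‖w t‖ ^ p)) :=
                mul_le_mul_of_nonneg_left (le_trans h1 h2) hte
            _ = 2 ^ p * (t ^ (p * (1 - μ)) * ‖v t‖ ^ p + t ^ (p * (1 - μ)) * ‖w t‖ ^ p) := by
                ring
        calc ENNReal.ofReal (t ^ (p * (1 - μ)) * ‖v t - w t‖ ^ p)
            ≤ ENNReal.ofReal (2 ^ p * (t ^ (p * (1 - μ)) * ‖v t‖ ^ p +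
                t ^ (p * (1 - μ)) * ‖w t‖ ^ p)) := ENNReal.ofReal_le_ofReal key
          _ = ENNReal.ofReal (2 ^ p) * (ENNReal.ofReal (t ^ (p * (1 - μ)) * ‖v t‖ ^ p) +
                ENNReal.ofReal (t ^ (p * (1 - μ)) * ‖w t‖ ^ p)) := by
              rw [ENNReal.ofReal_mul (by positivity),
                ENNReal.ofReal_add (by positivity) (by positivity)]
    _ = ENNReal.ofReal (2 ^ p) * (wInt p μ (Ioi 0) v + wInt p μ (Ioi 0) w) := by
        rw [lintegral_const_mul' _ _ ENNReal.ofReal_ne_top,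
          lintegral_add_left' (wInt_aemeas p μ hv)]
        rfl

variable [NormedSpace ℝ E] [CompleteSpace E]

lemma continuousOn_of_ftc (h G : ℝ → E)
    (hint : ∀ a b : ℝ, 0 < a → IntegrableOn h (Ioo a b))
    (hG : ∀ a b : ℝ, 0 < a → a ≤ b → G b - G a = ∫ r in Ioo a b, h r) :
    ContinuousOn G (Ioi 0) := by
  intro t0 ht0
  have ht0' : (0:ℝ) < t0 := ht0
  set c : ℝ := t0 / 2 with hcdef
  have hc : 0 < c := by positivity
  set h' : ℝ → E := (Ioi (c/2)).indicator h with hh'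
  have hii : ∀ a b : ℝ, IntervalIntegrable h' volume a b := by
    intro a b
    have key : ∀ a b : ℝ, a ≤ b → IntervalIntegrable h' volume a b := by
      intro a b hab
      rw [intervalIntegrable_iff_integrableOn_Ioc_of_le hab]
      rw [IntegrableOn, Measure.restrict_congr_set Ioc_ae_eq_Icc]
      rw [← IntegrableOn]
      have : IntegrableOn h' (Icc a b) := by
        rw [hh', IntegrableOn, integrable_indicator_iff measurableSet_Ioi]
        rw [IntegrableOn, Measure.restrict_restrict measurableSet_Ioi]
        have hsub : Ioi (c/2) ∩ Icc a b ⊆ Ioo (c/4) (b+1) := by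
          intro x hx
          exact ⟨lt_of_lt_of_le (by linarith) (le_of_lt hx.1), lt_of_le_of_lt hx.2.2 (by linarith)⟩
        exact (hint (c/4) (b+1) (by positivity)).mono_set hsub
      exact this
    rcases le_total a b with hab | hab
    · exact key a b hab
    · exact (key b a hab).symm
  have hPc : Continuous fun x => ∫ r in c..x, h' r :=
    intervalIntegral.continuous_primitive hii c
  have heq : ∀ x ∈ Ioi (c/2), G x = G c + ∫ r in c..x, h' r := by
    intro x hx
    have hx' : (c/2 : ℝ) < x := hx
    rcases le_total c x with hcx | hcx
    · have h1 := hG c x hc hcx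
      have h2 : ∫ r in c..x, h' r = ∫ r in Ioo c x, h r := by
        rw [intervalIntegral.integral_of_le hcx, MeasureTheory.integral_Ioc_eq_integral_Ioo]
        refine setIntegral_congr_fun measurableSet_Ioo fun r hr => ?_
        exact indicator_of_mem (by exact lt_trans (by linarith) hr.1) h
      rw [h2, ← h1]; abel
    · have h1 := hG x c (by linarith [hc]) hcx
      have h2 : ∫ r in c..x, h' r = -∫ r in Ioo x c, h r := by
        rw [intervalIntegral.integral_symm, intervalIntegral.integral_of_le hcx,
          MeasureTheory.integral_Ioc_eq_integral_Ioo]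
        congr 1
        refine setIntegral_congr_fun measurableSet_Ioo fun r hr => ?_
        exact indicator_of_mem (by exact lt_trans hx' hr.1) h
      rw [h2, ← h1]; abel
  have hmem : Ioi (c/2) ∈ 𝓝 t0 := isOpen_Ioi.mem_nhds (by simp [hcdef]; linarith)
  have : ContinuousAt G t0 := by
    refine ContinuousAt.congr
      (f := fun x => G c + ∫ r in c..x, h' r)
      (((continuous_const.add hPc) : Continuous fun x => G c + ∫ r in c..x, h' r).continuousAt) ?_
    filter_upwards [hmem] with x hx
    exact (heq x hx).symm
  exact this.continuousWithinAt

lemma exp_growth_of_ftc (w : ℝ → E) (hw : ContinuousOn w (Ioi 0))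
    (hG : ∀ a b : ℝ, 0 < a → a ≤ b → w b - w a = ∫ r in Ioo a b, w r)
    {a b : ℝ} (ha : 0 < a) (hab : a ≤ b) : w b = Real.exp (b - a) • w a := by
  rcases eq_or_lt_of_le hab with rfl | hab'
  · simp
  have hderivw : ∀ x ∈ Ioi (a/2), HasDerivAt w (w x) x := by
    intro x hx
    have hx' : (a/2 : ℝ) < x := hx
    have hx0 : (0:ℝ) < x := by linarith [ha]
    have hsubIcc : uIcc a x ⊆ Ioi (0:ℝ) := fun y hy =>
      lt_of_lt_of_le (lt_min ha hx0) hy.1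
    have hint : IntervalIntegrable w volume a x :=
      (hw.mono hsubIcc).intervalIntegrable
    have hmeas : StronglyMeasurableAtFilter w (𝓝 x) volume :=
      ContinuousOn.stronglyMeasurableAtFilter isOpen_Ioi hw x hx0
    have hcont : ContinuousAt w x := hw.continuousAt (isOpen_Ioi.mem_nhds hx0)
    have hF : HasDerivAt (fun y => w a + ∫ r in a..y, w r) (w x) x :=
      (intervalIntegral.integral_hasDerivAt_right hint hmeas hcont).const_add (w a)
    refine hF.congr_of_eventuallyEq ?_
    filter_upwards [isOpen_Ioi.mem_nhds hx'] with y hy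
    have hy' : (a/2:ℝ) < y := hy
    have hy0 : (0:ℝ) < y := by linarith
    rcases le_total a y with hay | hay
    · have h1 := hG a y ha hay
      rw [intervalIntegral.integral_of_le hay, MeasureTheory.integral_Ioc_eq_integral_Ioo, ← h1]
      abel
    · have h1 := hG y a hy0 hay
      rw [intervalIntegral.integral_symm, intervalIntegral.integral_of_le hay,
        MeasureTheory.integral_Ioc_eq_integral_Ioo, ← h1]
      abel
  set q : ℝ → E := fun x => Real.exp (-x) • w x with hq
  have hderivq : ∀ x ∈ Ioi (a/2), HasDerivAt q 0 x := by
    intro x hx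
    have hexp : HasDerivAt (fun y : ℝ => Real.exp (-y)) (Real.exp (-x) * (-1)) x :=
      (hasDerivAt_neg x).exp
    have := hexp.smul (hderivw x hx)
    have h0 : Real.exp (-x) • w x + (Real.exp (-x) * (-1)) • w x = 0 := by
      rw [mul_neg_one, neg_smul]; abel
    rw [h0] at this
    exact this
  have hconst : ∀ x ∈ Icc a b, q x = q a := by
    refine constant_of_derivWithin_zero (fun x hx => ?_) (fun x hx => ?_)
    · exact ((hderivq x (by exact lt_of_lt_of_le (by linarith) hx.1)).differentiableAt).differentiableWithinAt
    · exact ((hderivq x (lt_of_lt_of_le (by linarith) hx.1)).hasDerivWithinAt).derivWithin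
        ((uniqueDiffOn_Icc hab') x (Ico_subset_Icc_self hx))
  have hqb := hconst b ⟨hab, le_rfl⟩
  have hkey : Real.exp b • q b = Real.exp b • q a := by rw [hqb]
  rw [hq] at hkey
  simp only [smul_smul, ← Real.exp_add] at hkey
  rw [show b + -b = 0 by ring, Real.exp_zero, one_smul] at hkey
  rw [hkey, show b + -a = b - a by ring]

lemma fubini_exp {a b : ℝ} (h : ℝ → E) (hsm : StronglyMeasurable h)
    (hint : IntegrableOn h (Ioo a b)) :
    ∫ t in Ioo a b, Real.exp t • ∫ r in Ioo t b, h r =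
      ∫ r in Ioo a b, (Real.exp r - Real.exp a) • h r := by
  set μ := volume.restrict (Ioo a b) with hμ
  have hfin : IsFiniteMeasure μ := by
    constructor
    rw [hμ, Measure.restrict_apply_univ, Real.volume_Ioo]
    exact ENNReal.ofReal_lt_top
  set k : ℝ → ℝ → E := fun t r => ({q : ℝ × ℝ | q.1 < q.2}.indicator
      (fun q : ℝ × ℝ => Real.exp q.1 • h q.2)) (t, r) with hk
  have hksm : StronglyMeasurable (Function.uncurry k) := by
    have : Function.uncurry k = ({q : ℝ × ℝ | q.1 < q.2}.indicator
        (fun q : ℝ × ℝ => Real.exp q.1 • h q.2)) := rfl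
    rw [this]
    exact StronglyMeasurable.indicator
      (((Real.continuous_exp.comp continuous_fst).stronglyMeasurable).smul
        (hsm.comp_measurable measurable_snd))
      (measurableSet_lt measurable_fst measurable_snd)
  have hkt : ∀ t : ℝ, k t = (Ioi t).indicator (fun r => Real.exp t • h r) := by
    intro t; funext r
    by_cases htr : t < r
    · simp [hk, indicator_of_mem, htr, mem_Ioi]
    · simp [hk, indicator_of_notMem, htr, mem_Ioi]
  have hintk : ∀ t : ℝ, Integrable (k t) μ := by
    intro t
    rw [hkt t]
    exact (hint.smul (Real.exp t)).indicator measurableSet_Ioi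
  have hkint : Integrable (Function.uncurry k) (μ.prod μ) := by
    refine (integrable_prod_iff hksm.aestronglyMeasurable).2 ⟨?_, ?_⟩
    · exact ae_of_all _ fun t => hintk t
    · refine Integrable.mono' (g := fun _ => Real.exp b * ∫ r, ‖h r‖ ∂μ)
        (integrable_const _) ?_ ?_
      · exact (hksm.aestronglyMeasurable.norm).integral_prod_right'
      · filter_upwards [self_mem_ae_restrict measurableSet_Ioo] with t ht
        have h1 : ∀ r, ‖k t r‖ ≤ Real.exp b * ‖h r‖ := by
          intro r
          rw [hkt t]
          by_cases hr : r ∈ Ioi t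
          · rw [indicator_of_mem hr, norm_smul, Real.norm_eq_abs,
              abs_of_pos (Real.exp_pos _)]
            exact mul_le_mul_of_nonneg_right (Real.exp_le_exp.2 ht.2.le) (norm_nonneg _)
          · rw [indicator_of_notMem hr]
            simp [mul_nonneg (Real.exp_pos b).le (norm_nonneg _)]
        have h2 : ∫ r, ‖k t r‖ ∂μ ≤ ∫ r, Real.exp b * ‖h r‖ ∂μ :=
          integral_mono (hintk t).norm (hint.norm.const_mul _) h1
        rw [Real.norm_eq_abs, abs_of_nonneg (integral_nonneg fun r => norm_nonneg _)]
        rw [integral_const_mul] at h2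
        exact h2
  have hswap := integral_integral_swap (f := k) (μ := μ) (ν := μ) hkint
  have hL : ∫ t, ∫ r, k t r ∂μ ∂μ = ∫ t in Ioo a b, Real.exp t • ∫ r in Ioo t b, h r := by
    refine setIntegral_congr_fun measurableSet_Ioo fun t ht => ?_
    rw [hkt t, hμ, setIntegral_indicator measurableSet_Ioi]
    have : Ioo a b ∩ Ioi t = Ioo t b := by
      ext x; simp only [mem_inter_iff, mem_Ioo, mem_Ioi]
      constructor
      · rintro ⟨⟨_, h2⟩, h3⟩; exact ⟨h3, h2⟩
      · rintro ⟨h1, h2⟩; exact ⟨⟨lt_trans ht.1 h1, h2⟩, h1⟩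
    rw [this, integral_smul]
  have hR : ∫ r, ∫ t, k t r ∂μ ∂μ = ∫ r in Ioo a b, (Real.exp r - Real.exp a) • h r := by
    refine setIntegral_congr_fun measurableSet_Ioo fun r hr => ?_
    have hkr : (fun t => k t r) = (Iio r).indicator (fun t => Real.exp t • h r) := by
      funext t
      by_cases htr : t < r
      · simp [hk, indicator_of_mem, htr, mem_Iio]
      · simp [hk, indicator_of_notMem, htr, mem_Iio]
    rw [hkr, hμ, setIntegral_indicator measurableSet_Iio]
    have : Ioo a b ∩ Iio r = Ioo a r := by
      ext x; simp only [mem_inter_iff, mem_Ioo, mem_Iio]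
      constructor
      · rintro ⟨⟨h1, _⟩, h3⟩; exact ⟨h1, h3⟩
      · rintro ⟨h1, h2⟩; exact ⟨⟨h1, lt_trans h2 hr.2⟩, h2⟩
    rw [this, integral_smul_const]
    congr 1
    rw [← MeasureTheory.integral_Ioc_eq_integral_Ioo,
      ← intervalIntegral.integral_of_le hr.1.le, integral_exp]
  rw [← hL, hswap, hR]

end Helpers
/-- For `f ∈ L_{p,μ}((0,∞);E)` the function
`u(t) = ∫_0^∞ e^{-s} f(t+s) ds` is well defined a.e., belongs to `W^1_{p,μ}((0,∞);E)`,
solves `u - u' = f` a.e., satisfies `‖u‖_{L_{p,μ}} ≤ ‖f‖_{L_{p,μ}}`, and is the unique such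
solution; in particular `1 - ∂_t : W^1_{p,μ} → L_{p,μ}` is bijective. -/
theorem stmt_12 {E : Type*} [NormedAddCommGroup E] [NormedSpace ℝ E] [CompleteSpace E]
    (p μ : ℝ) (hp : 1 < p) (hμ : 1 / p < μ) (hμ1 : μ ≤ 1)
    (f : ℝ → E) (hf : MemWLp p μ (Ioi 0) f)
    (u : ℝ → E) (hu : ∀ t, u t = ∫ s in Ioi (0 : ℝ), Real.exp (-s) • f (t + s)) :
    (∀ᵐ t ∂(MeasureTheory.volume.restrict (Ioi (0 : ℝ))),
        IntegrableOn (fun s => Real.exp (-s) • f (t + s)) (Ioi (0 : ℝ))) ∧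
    (∃ u' : ℝ → E,
      MemW1 p μ (Ioi 0) u u' ∧
      (∀ᵐ t ∂(MeasureTheory.volume.restrict (Ioi (0 : ℝ))), u t - u' t = f t)) ∧
    wNorm p μ (Ioi 0) u ≤ wNorm p μ (Ioi 0) f ∧
    (∀ v v' : ℝ → E, MemW1 p μ (Ioi 0) v v' →
      (∀ᵐ t ∂(MeasureTheory.volume.restrict (Ioi (0 : ℝ))), v t - v' t = f t) →
      ∀ᵐ t ∂(MeasureTheory.volume.restrict (Ioi (0 : ℝ))), v t = u t) := by
  obtain ⟨hfm, hfi⟩ := hf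
  have hpq : p.HolderConjugate (p / (p - 1)) := Real.HolderConjugate.conjExponent hp
  set q : ℝ := p / (p - 1) with hqdef
  have hp0 : (0:ℝ) < p := hpq.pos
  have hμ0 : 0 ≤ 1 - μ := by linarith
  have he0 : 0 ≤ p * (1 - μ) := mul_nonneg hp0.le hμ0
  -- measurable representative
  set f' : ℝ → E := hfm.mk f with hf'def
  have hf'sm : StronglyMeasurable f' := hfm.stronglyMeasurable_mk
  have hff' : f =ᵐ[volume.restrict (Ioi 0)] f' := hfm.ae_eq_mk
  have hwf' : wInt p μ (Ioi 0) f' = wInt p μ (Ioi 0) f := wInt_congr_ae p μ hff'.symm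
  set h : ℝ → E := fun r => Real.exp (-r) • f' r with hhdef
  have hsm : StronglyMeasurable h :=
    ((Real.continuous_exp.comp continuous_neg).stronglyMeasurable).smul hf'sm
  have hf'h : ∀ r : ℝ, f' r = Real.exp r • h r := by
    intro r
    rw [hhdef]
    simp [smul_smul, ← Real.exp_add]
  -- integrability of ‖f'‖^p on (a,∞)
  have hfp : ∀ a : ℝ, 0 < a → IntegrableOn (fun r => ‖f' r‖ ^ p) (Ioi a) := by
    intro a ha
    constructor
    · exact (hf'sm.norm.measurable.pow_const _).aestronglyMeasurable
    · rw [hasFiniteIntegral_iff_ofReal (ae_of_all _ fun r => Real.rpow_nonneg (norm_nonneg _) _)]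
      have key : ∀ r ∈ Ioi a, ENNReal.ofReal (‖f' r‖ ^ p) ≤
          ENNReal.ofReal (a ^ (-(p * (1 - μ)))) *
            ENNReal.ofReal (r ^ (p * (1 - μ)) * ‖f' r‖ ^ p) := by
        intro r hr
        rw [← ENNReal.ofReal_mul (Real.rpow_nonneg ha.le _)]
        refine ENNReal.ofReal_le_ofReal ?_
        have h1 : a ^ (p * (1 - μ)) ≤ r ^ (p * (1 - μ)) :=
          Real.rpow_le_rpow ha.le (le_of_lt hr) he0
        have h2 : 0 < a ^ (p * (1 - μ)) := Real.rpow_pos_of_pos ha _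
        rw [Real.rpow_neg ha.le, ← mul_assoc]
        calc ‖f' r‖ ^ p = (a ^ (p * (1 - μ)))⁻¹ * a ^ (p * (1 - μ)) * ‖f' r‖ ^ p := by
              rw [inv_mul_cancel₀ h2.ne', one_mul]
          _ ≤ (a ^ (p * (1 - μ)))⁻¹ * r ^ (p * (1 - μ)) * ‖f' r‖ ^ p :=
              mul_le_mul_of_nonneg_right
                (mul_le_mul_of_nonneg_left h1 (inv_nonneg.2 h2.le))
                (Real.rpow_nonneg (norm_nonneg (f' r)) p)
      calc ∫⁻ r in Ioi a, ENNReal.ofReal (‖f' r‖ ^ p)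
          ≤ ∫⁻ r in Ioi a, ENNReal.ofReal (a ^ (-(p * (1 - μ)))) *
              ENNReal.ofReal (r ^ (p * (1 - μ)) * ‖f' r‖ ^ p) := by
            refine lintegral_mono_ae ?_
            filter_upwards [self_mem_ae_restrict measurableSet_Ioi] with r hr
            exact key r hr
        _ = ENNReal.ofReal (a ^ (-(p * (1 - μ)))) *
              ∫⁻ r in Ioi a, ENNReal.ofReal (r ^ (p * (1 - μ)) * ‖f' r‖ ^ p) :=
            lintegral_const_mul' _ _ ENNReal.ofReal_ne_top
        _ ≤ ENNReal.ofReal (a ^ (-(p * (1 - μ)))) * wInt p μ (Ioi 0) f' := by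
            gcongr
            exact lintegral_mono_set (Ioi_subset_Ioi ha.le)
        _ < ⊤ := ENNReal.mul_lt_top ENNReal.ofReal_lt_top (hwf' ▸ hfi)
  -- integrability of h on (a,∞)
  have hhint : ∀ a : ℝ, 0 < a → IntegrableOn h (Ioi a) := by
    intro a ha
    have hB : IntegrableOn (fun r => Real.exp (-q * r) / q + ‖f' r‖ ^ p / p) (Ioi a) :=
      ((exp_neg_integrableOn_Ioi a hpq.symm.pos).div_const q).add ((hfp a ha).div_const p)
    refine Integrable.mono' hB hsm.aestronglyMeasurable (ae_of_all _ fun r => ?_)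
    rw [hhdef]
    simp only [norm_smul, Real.norm_eq_abs, abs_of_pos (Real.exp_pos _), norm_norm]
    have hy := Real.young_inequality_of_nonneg (Real.exp_pos (-r)).le
      (norm_nonneg (f' r)) hpq.symm
    calc Real.exp (-r) * ‖f' r‖ ≤ Real.exp (-r) ^ q / q + ‖f' r‖ ^ p / p := hy
      _ = Real.exp (-q * r) / q + ‖f' r‖ ^ p / p := by
          rw [← Real.exp_mul, show -r * q = -q * r by ring]
  -- integrability of f' on bounded intervals
  have hf'int : ∀ a b : ℝ, 0 < a → IntegrableOn f' (Ioo a b) := by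
    intro a b ha
    have h1 : IntegrableOn h (Ioo a b) := (hhint a ha).mono_set Ioo_subset_Ioi_self
    refine Integrable.mono' (h1.norm.const_mul (Real.exp b)) hf'sm.aestronglyMeasurable ?_
    filter_upwards [self_mem_ae_restrict measurableSet_Ioo] with r hr
    rw [hf'h r, norm_smul, Real.norm_eq_abs, abs_of_pos (Real.exp_pos _)]
    exact mul_le_mul_of_nonneg_right (Real.exp_le_exp.2 hr.2.le) (norm_nonneg _)
  -- the primitive g
  set g : ℝ → E := fun t => ∫ r in Ioi t, h r with hgdef
  have hsplit : ∀ a b : ℝ, 0 < a → a ≤ b → g a = (∫ r in Ioo a b, h r) + g b := by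
    intro a b ha hab
    have h1 : IntegrableOn h (Ioi a) := hhint a ha
    have h2 : Ioi a = Ioc a b ∪ Ioi b := (Ioc_union_Ioi_eq_Ioi hab).symm
    calc g a = ∫ r in Ioc a b ∪ Ioi b, h r := by rw [hgdef]; rw [← h2]
      _ = (∫ r in Ioc a b, h r) + ∫ r in Ioi b, h r :=
          setIntegral_union (Ioc_disjoint_Ioi le_rfl) measurableSet_Ioi
            (h1.mono_set Ioc_subset_Ioi_self) (h1.mono_set (Ioi_subset_Ioi hab))
      _ = (∫ r in Ioo a b, h r) + g b := by
          rw [MeasureTheory.integral_Ioc_eq_integral_Ioo]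
  have hgcont : ContinuousOn g (Ioi 0) := by
    refine continuousOn_of_ftc (fun r => -h r) g
      (fun a b ha => ((hhint a ha).mono_set Ioo_subset_Ioi_self).neg)
      (fun a b ha hab => ?_)
    rw [integral_neg, hsplit a b ha hab]
    abel
  -- identification of u
  have hugt : ∀ t : ℝ, 0 < t → u t = Real.exp t • g t ∧
      IntegrableOn (fun s => Real.exp (-s) • f (t + s)) (Ioi 0) := by
    intro t ht
    have hae : ∀ᵐ s ∂(volume.restrict (Ioi (0:ℝ))), f (s + t) = f' (s + t) := by
      have h1 : ∀ᵐ r ∂(volume.restrict (Ioi t)), f r = f' r :=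
        ae_mono (Measure.restrict_mono (Ioi_subset_Ioi ht.le) le_rfl) hff'
      rw [← map_restrict_Ioi t] at h1
      exact (addRight_embedding t).ae_map_iff.1 h1
    have hcomp : ∀ s : ℝ, ((fun r => Real.exp t • h r) ∘ (fun s : ℝ => s + t)) s =
        Real.exp (-s) • f' (s + t) := by
      intro s
      simp only [Function.comp_apply, hhdef, smul_smul, ← Real.exp_add]
      rw [show t + -(s + t) = -s by ring]
    have hInt' : Integrable ((fun r => Real.exp t • h r) ∘ (fun s : ℝ => s + t))
        (volume.restrict (Ioi 0)) := by
      rw [← (addRight_embedding t).integrable_map_iff, map_restrict_Ioi t]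
      exact (hhint t ht).smul (Real.exp t)
    constructor
    · rw [hu t]
      have e1 : ∫ s in Ioi (0:ℝ), Real.exp (-s) • f (t + s) =
          ∫ s in Ioi (0:ℝ), Real.exp (-s) • f' (s + t) := by
        refine integral_congr_ae ?_
        filter_upwards [hae] with s hs
        rw [add_comm t s, hs]
      have e2 : ∫ s in Ioi (0:ℝ), Real.exp (-s) • f' (s + t) =
          ∫ r in Ioi t, Real.exp t • h r := by
        rw [← map_restrict_Ioi t, (addRight_embedding t).integral_map]
        refine integral_congr_ae (ae_of_all _ fun s => ?_)
        exact (hcomp s).symm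
      rw [e1, e2, integral_smul]
    · have h3 : Integrable (fun s => Real.exp (-s) • f' (s + t))
          (volume.restrict (Ioi 0)) := by
        refine hInt'.congr (ae_of_all _ fun s => ?_)
        exact hcomp s
      refine h3.congr ?_
      filter_upwards [hae] with s hs
      rw [add_comm t s, ← hs]
  have hucont : ContinuousOn u (Ioi 0) := by
    have hc : ContinuousOn (fun t => Real.exp t • g t) (Ioi 0) :=
      (Real.continuous_exp.continuousOn).smul hgcont
    exact hc.congr fun t ht => (hugt t ht).1
  have huaesm : AEStronglyMeasurable u (volume.restrict (Ioi 0)) :=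
    hucont.aestronglyMeasurable measurableSet_Ioi
  refine ⟨?_, ?_⟩
  · filter_upwards [self_mem_ae_restrict measurableSet_Ioi] with t ht
    exact (hugt t ht).2
  -- ENNReal weight functions for the norm bound
  set Φ : ℝ → ℝ≥0∞ := fun r => ENNReal.ofReal (r ^ (1 - μ) * ‖f' r‖) with hΦdef
  have hΦm : Measurable Φ :=
    ENNReal.measurable_ofReal.comp ((measurable_id.pow_const _).mul hf'sm.norm.measurable)
  set W : ℝ → ℝ≥0∞ := fun s => ENNReal.ofReal (Real.exp (-s)) with hWdef
  have hWm : Measurable W :=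
    ENNReal.measurable_ofReal.comp (Real.measurable_exp.comp measurable_neg)
  have hW0 : ∀ s, W s ≠ 0 := fun s => (ENNReal.ofReal_pos.2 (Real.exp_pos _)).ne'
  have hWtop : ∀ s, W s ≠ ⊤ := fun s => ENNReal.ofReal_ne_top
  have hW1 : ∫⁻ s in Ioi (0:ℝ), W s = 1 := by
    have hi : IntegrableOn (fun s => Real.exp (-s)) (Ioi (0:ℝ)) := by
      have := exp_neg_integrableOn_Ioi (0:ℝ) zero_lt_one
      simpa using this
    rw [hWdef, ← ofReal_integral_eq_lintegral_ofReal hi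
      (ae_of_all _ fun s => (Real.exp_pos _).le), integral_exp_neg_Ioi_zero,
      ENNReal.ofReal_one]
  have hΦp : ∀ r ∈ Ioi (0:ℝ), Φ r ^ p = ENNReal.ofReal (r ^ (p * (1 - μ)) * ‖f' r‖ ^ p) := by
    intro r hr
    have hr0 : (0:ℝ) < r := hr
    have hΦr : Φ r = ENNReal.ofReal (r ^ (1 - μ) * ‖f' r‖) := rfl
    rw [hΦr, ENNReal.ofReal_rpow_of_nonneg (by positivity) hp0.le]
    congr 1
    rw [Real.mul_rpow (by positivity) (norm_nonneg _), ← Real.rpow_mul hr0.le,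
      show (1 - μ) * p = p * (1 - μ) from mul_comm _ _]
  have hptw : ∀ t ∈ Ioi (0:ℝ),
      ENNReal.ofReal (t ^ (p * (1 - μ)) * ‖u t‖ ^ p) ≤
        (∫⁻ s in Ioi (0:ℝ), W s * Φ (s + t)) ^ p := by
    intro t ht
    have ht0 : (0:ℝ) < t := ht
    have hgle : ‖g t‖ ≤ ∫ r in Ioi t, ‖h r‖ := by
      rw [hgdef]
      exact norm_integral_le_integral_norm _
    have hb1 : t ^ (1 - μ) * ‖u t‖ ≤ (t ^ (1 - μ) * Real.exp t) * ∫ r in Ioi t, ‖h r‖ := by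
      rw [(hugt t ht0).1, norm_smul, Real.norm_eq_abs, abs_of_pos (Real.exp_pos _)]
      calc t ^ (1 - μ) * (Real.exp t * ‖g t‖)
          = (t ^ (1 - μ) * Real.exp t) * ‖g t‖ := by ring
        _ ≤ _ := mul_le_mul_of_nonneg_left hgle (by positivity)
    have hInt : Integrable (fun r => (t ^ (1 - μ) * Real.exp t) * ‖h r‖)
        (volume.restrict (Ioi t)) := (hhint t ht0).norm.const_mul _
    have hb2 : ENNReal.ofReal ((t ^ (1 - μ) * Real.exp t) * ∫ r in Ioi t, ‖h r‖) =
        ∫⁻ r in Ioi t, ENNReal.ofReal ((t ^ (1 - μ) * Real.exp t) * ‖h r‖) := by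
      rw [← integral_const_mul, ofReal_integral_eq_lintegral_ofReal hInt
        (ae_of_all _ fun r => by positivity)]
    have hb3 : ∀ r ∈ Ioi t, ENNReal.ofReal ((t ^ (1 - μ) * Real.exp t) * ‖h r‖) ≤
        ENNReal.ofReal (Real.exp (t - r)) * Φ r := by
      intro r hr
      have hr0 : (0:ℝ) < r := lt_trans ht0 hr
      rw [hΦdef, ← ENNReal.ofReal_mul (Real.exp_pos _).le]
      refine ENNReal.ofReal_le_ofReal ?_
      have hnorm : ‖h r‖ = Real.exp (-r) * ‖f' r‖ := by
        rw [hhdef]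
        simp only [norm_smul, Real.norm_eq_abs, abs_of_pos (Real.exp_pos _)]
      rw [hnorm]
      have ht1 : t ^ (1 - μ) ≤ r ^ (1 - μ) := Real.rpow_le_rpow ht0.le (le_of_lt hr) hμ0
      have hee : Real.exp t * Real.exp (-r) = Real.exp (t - r) := by
        rw [← Real.exp_add]; ring_nf
      calc t ^ (1 - μ) * Real.exp t * (Real.exp (-r) * ‖f' r‖)
          = (Real.exp t * Real.exp (-r)) * (t ^ (1 - μ) * ‖f' r‖) := by ring
        _ ≤ (Real.exp t * Real.exp (-r)) * (r ^ (1 - μ) * ‖f' r‖) :=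
            mul_le_mul_of_nonneg_left
              (mul_le_mul_of_nonneg_right ht1 (norm_nonneg _)) (by positivity)
        _ = Real.exp (t - r) * (r ^ (1 - μ) * ‖f' r‖) := by rw [hee]
    have hb4 : ∫⁻ r in Ioi t, ENNReal.ofReal (Real.exp (t - r)) * Φ r =
        ∫⁻ s in Ioi (0:ℝ), W s * Φ (s + t) := by
      have hm : Measurable fun r => ENNReal.ofReal (Real.exp (t - r)) * Φ r :=
        (ENNReal.measurable_ofReal.comp
          (Real.measurable_exp.comp (measurable_const.sub measurable_id))).mul hΦm
      rw [← map_restrict_Ioi t, lintegral_map hm (measurable_add_const t)]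
      refine lintegral_congr fun s => ?_
      rw [hWdef, show t - (s + t) = -s by ring]
    calc ENNReal.ofReal (t ^ (p * (1 - μ)) * ‖u t‖ ^ p)
        = ENNReal.ofReal (t ^ (1 - μ) * ‖u t‖) ^ p := by
          rw [ENNReal.ofReal_rpow_of_nonneg (by positivity) hp0.le]
          congr 1
          rw [Real.mul_rpow (by positivity) (norm_nonneg _), ← Real.rpow_mul ht0.le,
            show (1 - μ) * p = p * (1 - μ) from mul_comm _ _]
      _ ≤ (∫⁻ s in Ioi (0:ℝ), W s * Φ (s + t)) ^ p := by
          refine ENNReal.rpow_le_rpow ?_ hp0.le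
          calc ENNReal.ofReal (t ^ (1 - μ) * ‖u t‖)
              ≤ ENNReal.ofReal ((t ^ (1 - μ) * Real.exp t) * ∫ r in Ioi t, ‖h r‖) :=
                ENNReal.ofReal_le_ofReal hb1
            _ = ∫⁻ r in Ioi t, ENNReal.ofReal ((t ^ (1 - μ) * Real.exp t) * ‖h r‖) := hb2
            _ ≤ ∫⁻ r in Ioi t, ENNReal.ofReal (Real.exp (t - r)) * Φ r := by
                refine lintegral_mono_ae ?_
                filter_upwards [self_mem_ae_restrict measurableSet_Ioi] with r hr
                exact hb3 r hr
            _ = ∫⁻ s in Ioi (0:ℝ), W s * Φ (s + t) := hb4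
  have hhold : ∀ t : ℝ, (∫⁻ s in Ioi (0:ℝ), W s * Φ (s + t)) ^ p ≤
      ∫⁻ s in Ioi (0:ℝ), W s * Φ (s + t) ^ p := by
    intro t
    have hΦt : Measurable fun s => Φ (s + t) := hΦm.comp (measurable_add_const t)
    set B := ∫⁻ s in Ioi (0:ℝ), W s * Φ (s + t) ^ p with hB
    have key : ∫⁻ s in Ioi (0:ℝ), W s * Φ (s + t) ≤ B ^ (1/p) := by
      have hH := ENNReal.lintegral_mul_le_Lp_mul_Lq (volume.restrict (Ioi 0)) hpq
        (f := fun s => W s ^ (1/p) * Φ (s + t)) (g := fun s => W s ^ (1/q))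
        (((hWm.pow_const _).mul hΦt).aemeasurable) ((hWm.pow_const _).aemeasurable)
      have e1 : ∀ s : ℝ, W s ^ (1/p) * Φ (s + t) * W s ^ (1/q) = W s * Φ (s + t) := by
        intro s
        rw [mul_right_comm, ← ENNReal.rpow_add _ _ (hW0 s) (hWtop s),
          show 1/p + 1/q = 1 by
            rw [one_div, one_div]; exact hpq.inv_add_inv_eq_one,
          ENNReal.rpow_one]
      have e2 : ∀ s : ℝ, (W s ^ (1/p) * Φ (s + t)) ^ p = W s * Φ (s + t) ^ p := by
        intro s
        rw [ENNReal.mul_rpow_of_nonneg _ _ hp0.le, ← ENNReal.rpow_mul,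
          one_div_mul_cancel hp0.ne', ENNReal.rpow_one]
      have e3 : ∀ s : ℝ, (W s ^ (1/q)) ^ q = W s := by
        intro s
        rw [← ENNReal.rpow_mul, one_div_mul_cancel hpq.symm.ne_zero, ENNReal.rpow_one]
      calc ∫⁻ s in Ioi (0:ℝ), W s * Φ (s + t)
          = ∫⁻ s in Ioi (0:ℝ), W s ^ (1/p) * Φ (s + t) * W s ^ (1/q) :=
            lintegral_congr fun s => (e1 s).symm
        _ ≤ (∫⁻ s in Ioi (0:ℝ), (W s ^ (1/p) * Φ (s + t)) ^ p) ^ (1/p) *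
            (∫⁻ s in Ioi (0:ℝ), (W s ^ (1/q)) ^ q) ^ (1/q) := hH
        _ = B ^ (1/p) * 1 := by
            rw [lintegral_congr e2, lintegral_congr e3, hW1, ENNReal.one_rpow]
        _ = B ^ (1/p) := mul_one _
    calc (∫⁻ s in Ioi (0:ℝ), W s * Φ (s + t)) ^ p ≤ (B ^ (1/p)) ^ p :=
          ENNReal.rpow_le_rpow key hp0.le
      _ = B := by rw [← ENNReal.rpow_mul, one_div_mul_cancel hp0.ne', ENNReal.rpow_one]
  have hΦpint : ∫⁻ r in Ioi (0:ℝ), Φ r ^ p = wInt p μ (Ioi 0) f' := by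
    unfold wInt
    refine setLIntegral_congr_fun measurableSet_Ioi (fun r hr => hΦp r hr)
  have hswap : ∫⁻ t in Ioi (0:ℝ), ∫⁻ s in Ioi (0:ℝ), W s * Φ (s + t) ^ p ≤
      wInt p μ (Ioi 0) f' := by
    have hjm : Measurable (Function.uncurry fun (t s : ℝ) => W s * Φ (s + t) ^ p) := by
      apply Measurable.mul
      · exact hWm.comp measurable_snd
      · exact (hΦm.comp (measurable_snd.add measurable_fst)).pow_const _
    rw [lintegral_lintegral_swap hjm.aemeasurable]
    calc ∫⁻ s in Ioi (0:ℝ), ∫⁻ t in Ioi (0:ℝ), W s * Φ (s + t) ^ p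
        ≤ ∫⁻ s in Ioi (0:ℝ), W s * wInt p μ (Ioi 0) f' := by
          refine lintegral_mono_ae ?_
          filter_upwards [self_mem_ae_restrict measurableSet_Ioi] with s hs
          rw [lintegral_const_mul' _ _ (hWtop s)]
          refine mul_le_mul_right ?_ (W s)
          have hm2 : Measurable fun r => Φ r ^ p := hΦm.pow_const _
          have hcv : ∫⁻ t in Ioi (0:ℝ), Φ (t + s) ^ p = ∫⁻ r in Ioi s, Φ r ^ p := by
            rw [← map_restrict_Ioi s, lintegral_map hm2 (measurable_add_const s)]
          calc ∫⁻ t in Ioi (0:ℝ), Φ (s + t) ^ p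
              = ∫⁻ t in Ioi (0:ℝ), Φ (t + s) ^ p :=
                lintegral_congr fun t => by rw [add_comm]
            _ = ∫⁻ r in Ioi s, Φ r ^ p := hcv
            _ ≤ ∫⁻ r in Ioi (0:ℝ), Φ r ^ p := lintegral_mono_set (Ioi_subset_Ioi (le_of_lt hs))
            _ = wInt p μ (Ioi 0) f' := hΦpint
      _ = wInt p μ (Ioi 0) f' := by
          rw [lintegral_mul_const' _ _ (by rw [hwf']; exact hfi.ne), hW1, one_mul]
  have hwIntu : wInt p μ (Ioi 0) u ≤ wInt p μ (Ioi 0) f := by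
    rw [← hwf']
    calc wInt p μ (Ioi 0) u
        ≤ ∫⁻ t in Ioi (0:ℝ), (∫⁻ s in Ioi (0:ℝ), W s * Φ (s + t)) ^ p := by
          unfold wInt
          refine lintegral_mono_ae ?_
          filter_upwards [self_mem_ae_restrict measurableSet_Ioi] with t ht
          exact hptw t ht
      _ ≤ ∫⁻ t in Ioi (0:ℝ), ∫⁻ s in Ioi (0:ℝ), W s * Φ (s + t) ^ p :=
          lintegral_mono fun t => hhold t
      _ ≤ wInt p μ (Ioi 0) f' := hswap
  have hMemu : MemWLp p μ (Ioi 0) u := ⟨huaesm, lt_of_le_of_lt hwIntu hfi⟩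
  have hnorm : wNorm p μ (Ioi 0) u ≤ wNorm p μ (Ioi 0) f := by
    unfold wNorm
    exact ENNReal.rpow_le_rpow hwIntu (by positivity)
  set u' : ℝ → E := fun t => u t - f t with hu'def
  have hintf : ∀ a b : ℝ, 0 < a → IntegrableOn f (Ioo a b) := by
    intro a b ha
    refine (hf'int a b ha).congr ?_
    have hmono : f =ᶠ[ae (volume.restrict (Ioo a b))] f' :=
      ae_mono (Measure.restrict_mono
        (show Ioo a b ⊆ Ioi (0:ℝ) from fun x hx => lt_trans ha hx.1) le_rfl) hff'
    exact hmono.symm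
  have hIu : ∀ a b : ℝ, 0 < a → a ≤ b → IntegrableOn u (Ioo a b) := by
    intro a b ha hab
    have hIcc : Icc a b ⊆ Ioi 0 := fun x hx => lt_of_lt_of_le ha hx.1
    exact ((hucont.mono hIcc).integrableOn_Icc).mono_set Ioo_subset_Icc_self
  have hftc : ∀ a b : ℝ, 0 < a → a ≤ b → u b - u a = ∫ t in Ioo a b, (u t - f t) := by
    intro a b ha hab
    have hb : 0 < b := lt_of_lt_of_le ha hab
    have hioo : IntegrableOn h (Ioo a b) := (hhint a ha).mono_set Ioo_subset_Ioi_self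
    have hIu' := hIu a b ha hab
    have hIf := hintf a b ha
    have hIf' := hf'int a b ha
    have hsp := hsplit a b ha hab
    have hfub := fubini_exp (a := a) (b := b) h hsm hioo
    have hu2 : ∀ t ∈ Ioo a b, Real.exp t • ∫ r in Ioo t b, h r = u t - Real.exp t • g b := by
      intro t ht
      have h1 := hsplit t b (lt_trans ha ht.1) (le_of_lt ht.2)
      rw [(hugt t (lt_trans ha ht.1)).1,
        show (∫ r in Ioo t b, h r) = g t - g b by rw [h1]; abel, smul_sub]
    have hint2 : IntegrableOn (fun t : ℝ => Real.exp t • g b) (Ioo a b) :=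
      (((Real.continuous_exp.smul continuous_const).continuousOn).integrableOn_Icc).mono_set
        Ioo_subset_Icc_self
    have hint1 : IntegrableOn (fun t => Real.exp t • ∫ r in Ioo t b, h r) (Ioo a b) := by
      refine (hIu'.sub hint2).congr ?_
      filter_upwards [self_mem_ae_restrict measurableSet_Ioo] with t ht
      exact (hu2 t ht).symm
    have hexpint : IntegrableOn (fun r => Real.exp r • h r) (Ioo a b) :=
      hIf'.congr (ae_of_all _ fun r => by rw [hf'h r])
    have hIU : ∫ t in Ioo a b, u t =
        (∫ r in Ioo a b, (Real.exp r - Real.exp a) • h r) + (Real.exp b - Real.exp a) • g b := by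
      have e1 : ∫ t in Ioo a b, u t =
          ∫ t in Ioo a b, ((Real.exp t • ∫ r in Ioo t b, h r) + Real.exp t • g b) := by
        refine setIntegral_congr_fun measurableSet_Ioo fun t ht => ?_
        rw [hu2 t ht]; abel
      rw [e1, integral_add hint1 hint2, hfub]
      congr 1
      rw [integral_smul_const]
      congr 1
      rw [← MeasureTheory.integral_Ioc_eq_integral_Ioo, ← intervalIntegral.integral_of_le hab,
        integral_exp]
    have hIF : ∫ t in Ioo a b, f t = ∫ r in Ioo a b, Real.exp r • h r := by
      rw [show (∫ t in Ioo a b, f t) = ∫ t in Ioo a b, f' t from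
        integral_congr_ae (ae_mono (Measure.restrict_mono
          (show Ioo a b ⊆ Ioi (0:ℝ) from fun x hx => lt_trans ha hx.1) le_rfl) hff')]
      exact setIntegral_congr_fun measurableSet_Ioo fun r _ => hf'h r
    have hsub2 : ∫ r in Ioo a b, (Real.exp r - Real.exp a) • h r =
        (∫ r in Ioo a b, Real.exp r • h r) - Real.exp a • ∫ r in Ioo a b, h r := by
      calc ∫ r in Ioo a b, (Real.exp r - Real.exp a) • h r
          = ∫ r in Ioo a b, (Real.exp r • h r - Real.exp a • h r) :=
            setIntegral_congr_fun measurableSet_Ioo fun r _ => by rw [sub_smul]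
        _ = (∫ r in Ioo a b, Real.exp r • h r) - ∫ r in Ioo a b, Real.exp a • h r :=
            integral_sub hexpint (hioo.smul _)
        _ = (∫ r in Ioo a b, Real.exp r • h r) - Real.exp a • ∫ r in Ioo a b, h r := by
            rw [integral_smul]
    rw [integral_sub hIu' hIf, hIU, hIF, hsub2, (hugt b hb).1, (hugt a ha).1, hsp,
      smul_add, sub_smul]
    abel
  have hMemu' : MemWLp p μ (Ioi 0) u' := by
    constructor
    · exact huaesm.sub hfm
    · refine lt_of_le_of_lt (wInt_sub_le hp0.le u f huaesm hfm) ?_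
      exact ENNReal.mul_lt_top ENNReal.ofReal_lt_top (ENNReal.add_lt_top.2 ⟨hMemu.2, hfi⟩)
  have hLocAC : LocAC (Ioi 0) u u' := by
    intro a b ha hb hab
    exact ⟨(hIu a b ha hab).sub (hintf a b ha), hftc a b ha hab⟩
  refine ⟨⟨u', ⟨hMemu, hMemu', hLocAC⟩, ae_of_all _ fun t => ?_⟩, hnorm, ?_⟩
  · show u t - (u t - f t) = f t
    abel
  · -- uniqueness
    intro v v' hv hvf
    obtain ⟨hvL, hv'L, hvAC⟩ := hv
    have hw'eq : ∀ᵐ t ∂(volume.restrict (Ioi (0:ℝ))), v' t - u' t = v t - u t := by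
      filter_upwards [hvf] with t ht
      have hv't : v' t = v t - f t := by rw [← ht]; abel
      have hu't : u' t = u t - f t := rfl
      rw [hv't, hu't]; abel
    have hwftc : ∀ a b : ℝ, 0 < a → a ≤ b →
        (v b - u b) - (v a - u a) = ∫ t in Ioo a b, (v t - u t) := by
      intro a b ha hab
      have hb := lt_of_lt_of_le ha hab
      have h1 := (hvAC a b ha hb hab).2
      have h2 := (hLocAC a b ha hb hab).2
      have hint1 := (hvAC a b ha hb hab).1
      have hint2 := (hLocAC a b ha hb hab).1
      have e : (v b - u b) - (v a - u a) = ∫ t in Ioo a b, (v' t - u' t) := by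
        rw [integral_sub hint1 hint2, ← h1, ← h2]; abel
      rw [e]
      exact integral_congr_ae
        (ae_mono (Measure.restrict_mono (show Ioo a b ⊆ Ioi (0:ℝ) from fun x hx => lt_trans ha hx.1) le_rfl) hw'eq)
    have hwint : ∀ a b : ℝ, 0 < a → IntegrableOn (fun t => v t - u t) (Ioo a b) := by
      intro a b ha
      rcases le_total a b with hab | hab
      · have hb := lt_of_lt_of_le ha hab
        refine ((hvAC a b ha hb hab).1.sub (hLocAC a b ha hb hab).1).congr ?_
        exact ae_mono (Measure.restrict_mono (show Ioo a b ⊆ Ioi (0:ℝ) from fun x hx => lt_trans ha hx.1) le_rfl) hw'eq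
      · rw [Set.Ioo_eq_empty (not_lt.2 hab)]
        exact integrableOn_empty
    have hwcont : ContinuousOn (fun t => v t - u t) (Ioi 0) :=
      continuousOn_of_ftc (fun t => v t - u t) (fun t => v t - u t) hwint hwftc
    have hwfin : wInt p μ (Ioi 0) (fun t => v t - u t) < ⊤ :=
      lt_of_le_of_lt (wInt_sub_le hp0.le v u hvL.1 huaesm)
        (ENNReal.mul_lt_top ENNReal.ofReal_lt_top (ENNReal.add_lt_top.2 ⟨hvL.2, hMemu.2⟩))
    have hzero : ∀ a : ℝ, 0 < a → v a - u a = 0 := by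
      intro a ha
      by_contra hne
      have hc0 : 0 < a ^ (p * (1 - μ)) * ‖v a - u a‖ ^ p :=
        mul_pos (Real.rpow_pos_of_pos ha _)
          (Real.rpow_pos_of_pos (norm_pos_iff.2 hne) _)
      have hinf : wInt p μ (Ioi 0) (fun t => v t - u t) = ⊤ := by
        refine eq_top_iff.2 ?_
        calc (⊤ : ℝ≥0∞) = ENNReal.ofReal (a ^ (p * (1 - μ)) * ‖v a - u a‖ ^ p) *
              volume (Ioi a) := by
              rw [Real.volume_Ioi, ENNReal.mul_top (ENNReal.ofReal_pos.2 hc0).ne']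
          _ = ∫⁻ _ in Ioi a, ENNReal.ofReal (a ^ (p * (1 - μ)) * ‖v a - u a‖ ^ p) :=
              (setLIntegral_const _ _).symm
          _ ≤ ∫⁻ t in Ioi a, ENNReal.ofReal (t ^ (p * (1 - μ)) * ‖v t - u t‖ ^ p) := by
              refine lintegral_mono_ae ?_
              filter_upwards [self_mem_ae_restrict measurableSet_Ioi] with t ht
              refine ENNReal.ofReal_le_ofReal ?_
              have ht0 : (0:ℝ) < t := lt_trans ha ht
              have h1 : a ^ (p * (1 - μ)) ≤ t ^ (p * (1 - μ)) :=
                Real.rpow_le_rpow ha.le (le_of_lt ht) he0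
              have h3 : v t - u t = Real.exp (t - a) • (v a - u a) :=
                exp_growth_of_ftc (fun t => v t - u t) hwcont hwftc ha (le_of_lt ht)
              have h2 : ‖v a - u a‖ ≤ ‖v t - u t‖ := by
                rw [h3, norm_smul, Real.norm_eq_abs, abs_of_pos (Real.exp_pos _)]
                exact le_mul_of_one_le_left (norm_nonneg _)
                  (Real.one_le_exp (sub_nonneg.2 (le_of_lt (show a < t from ht))))
              have h2' : ‖v a - u a‖ ^ p ≤ ‖v t - u t‖ ^ p :=
                Real.rpow_le_rpow (norm_nonneg _) h2 hp0.le
              exact mul_le_mul h1 h2' (Real.rpow_nonneg (norm_nonneg _) _)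
                (Real.rpow_nonneg ht0.le _)
          _ ≤ wInt p μ (Ioi 0) (fun t => v t - u t) := by
              unfold wInt
              exact lintegral_mono_set (Ioi_subset_Ioi ha.le)
      rw [hinf] at hwfin
      exact absurd hwfin (lt_irrefl ⊤)
    filter_upwards [self_mem_ae_restrict measurableSet_Ioi] with t ht
    exact sub_eq_zero.1 (hzero t ht)
end
end

section
/- Let E be a Banach space, p ∈ (1,∞), μ ∈ (1/p,1], and let T > 0 be finite. There is a constant C = C(p,μ), independent of T, such that for every g ∈ L_{p,μ}((0,T);E) and u(t) = ∫_0^t g(τ) dτ one has the Poincaré inequality ‖u‖_{L_{p,μ}((0,T);E)} ≤ C · T · ‖g‖_{L_{p,μ}((0,T);E)}. -/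
open MeasureTheory Set Filter Topology
open scoped ENNReal NNReal

noncomputable section

/-- Poincaré inequality in `L_{p,μ}((0,T);E)`: for `u(t) = ∫_0^t g(τ) dτ`
one has `‖u‖_{L_{p,μ}((0,T);E)} ≤ C T ‖g‖_{L_{p,μ}((0,T);E)}` with `C = C(p,μ)`
independent of `T`. -/
theorem stmt_14 {E : Type*} [NormedAddCommGroup E] [NormedSpace ℝ E] [CompleteSpace E]
    (p μ : ℝ) (hp : 1 < p) (hμ : 1 / p < μ) (hμ1 : μ ≤ 1) :
    ∃ C : ℝ, 0 < C ∧ ∀ T : ℝ, 0 < T → ∀ g u : ℝ → E,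
      MemWLp p μ (Ioo 0 T) g →
      (∀ t, u t = ∫ τ in Ioo (0 : ℝ) t, g τ) →
      wNorm p μ (Ioo 0 T) u ≤ ENNReal.ofReal (C * T) * wNorm p μ (Ioo 0 T) g := by
  have hp0 : 0 < p := lt_trans one_pos hp
  set q : ℝ := p / (p - 1) with hq
  have hpq : p.HolderConjugate q := Real.HolderConjugate.conjExponent hp
  have hq0 : 0 < q := hpq.symm.pos
  have hqp : q * (p - 1) = p := by
    rw [hq]; exact div_mul_cancel₀ p (ne_of_gt (by linarith))
  have hpq' : p / q = p - 1 := by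
    rw [div_eq_iff hq0.ne', mul_comm, hqp]
  set r : ℝ := q * (1 - μ) with hr
  have hr0 : 0 ≤ r := mul_nonneg hq0.le (by linarith)
  have hr1 : r < 1 := by
    have h1 : 1 - μ < 1 / q := by
      have h2 : 1/q = 1 - 1/p := by
        have := hpq.inv_add_inv_eq_one
        rw [one_div, one_div]; linarith
      rw [h2]; linarith
    calc r = q * (1 - μ) := rfl
    _ < q * (1/q) := mul_lt_mul_of_pos_left h1 hq0
    _ = 1 := mul_one_div_cancel hq0.ne'
  have h1r : 0 < 1 - r := by linarith
  set K : ℝ := ((1-r)⁻¹) ^ (p-1) with hK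
  have hKpos : 0 < K := Real.rpow_pos_of_pos (by positivity) _
  refine ⟨(K/p) ^ (1/p), Real.rpow_pos_of_pos (by positivity) _, ?_⟩
  intro T hT g u hg hu
  set G := wInt p μ (Ioo 0 T) g with hG
  have hgm : AEStronglyMeasurable g (volume.restrict (Ioo 0 T)) := hg.1
  -- pointwise bound
  have key : ∀ t ∈ Ioo (0:ℝ) T,
      ENNReal.ofReal ‖u t‖ ≤ G ^ (1/p) * ENNReal.ofReal (t^(1-r)/(1-r)) ^ (1/q) := by
    rintro t ⟨ht, htT⟩
    have hsub : Ioo (0:ℝ) t ⊆ Ioo 0 T := Ioo_subset_Ioo_right htT.le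
    have hgm' : AEStronglyMeasurable g (volume.restrict (Ioo 0 t)) :=
      hgm.mono_measure (Measure.restrict_mono hsub le_rfl)
    have stepA : ENNReal.ofReal ‖u t‖ ≤ ∫⁻ τ in Ioo 0 t, (‖g τ‖₊ : ℝ≥0∞) := by
      rw [hu t, ofReal_norm]
      exact enorm_integral_le_lintegral_enorm _
    set F : ℝ → ℝ≥0∞ := fun τ => ENNReal.ofReal (τ^(1-μ)) * (‖g τ‖₊ : ℝ≥0∞) with hF
    set H : ℝ → ℝ≥0∞ := fun τ => ENNReal.ofReal (τ^(μ-1)) with hH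
    have hmeas_rpow : ∀ c : ℝ, Measurable fun τ : ℝ => ENNReal.ofReal (τ ^ c) := by
      intro c
      fun_prop
    have hFmeas : AEMeasurable F (volume.restrict (Ioo 0 t)) :=
      ((hmeas_rpow (1-μ)).aemeasurable).mul hgm'.enorm
    have hHmeas : AEMeasurable H (volume.restrict (Ioo 0 t)) :=
      (hmeas_rpow (μ-1)).aemeasurable
    have hcongr : ∫⁻ τ in Ioo 0 t, (‖g τ‖₊ : ℝ≥0∞) = ∫⁻ τ in Ioo 0 t, (F * H) τ := by
      refine setLIntegral_congr_fun_ae measurableSet_Ioo (ae_of_all _ fun τ hτ => ?_)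
      have hτ0 : 0 < τ := hτ.1
      simp only [F, H, Pi.mul_apply]
      rw [mul_right_comm, ← ENNReal.ofReal_mul (Real.rpow_nonneg hτ0.le _),
        ← Real.rpow_add hτ0]
      norm_num
    have holder := ENNReal.lintegral_mul_le_Lp_mul_Lq (volume.restrict (Ioo 0 t)) hpq
      hFmeas hHmeas
    have hFp : ∫⁻ τ in Ioo 0 t, F τ ^ p ≤ G := by
      have e1 : ∫⁻ τ in Ioo 0 t, F τ ^ p
          = ∫⁻ τ in Ioo 0 t, ENNReal.ofReal (τ ^ (p*(1-μ)) * ‖g τ‖ ^ p) := by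
        refine setLIntegral_congr_fun_ae measurableSet_Ioo (ae_of_all _ fun τ hτ => ?_)
        have hτ0 : 0 < τ := hτ.1
        simp only [F]
        rw [ENNReal.mul_rpow_of_nonneg _ _ hp0.le,
          ENNReal.ofReal_rpow_of_nonneg (Real.rpow_nonneg hτ0.le _) hp0.le,
          ← (by exact ofReal_norm (g τ) : ENNReal.ofReal ‖g τ‖ = ((‖g τ‖₊ : ℝ≥0) : ℝ≥0∞)),
          ENNReal.ofReal_rpow_of_nonneg (norm_nonneg _) hp0.le,
          ← ENNReal.ofReal_mul (Real.rpow_nonneg (Real.rpow_nonneg hτ0.le _) _),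
          ← Real.rpow_mul hτ0.le, mul_comm (1 - μ) p]
      rw [e1, hG]
      unfold wInt
      exact lintegral_mono_set hsub
    have hHq : ∫⁻ τ in Ioo 0 t, H τ ^ q = ENNReal.ofReal (t^(1-r)/(1-r)) := by
      have e1 : ∫⁻ τ in Ioo 0 t, H τ ^ q = ∫⁻ τ in Ioo 0 t, ENNReal.ofReal (τ ^ (-r)) := by
        refine setLIntegral_congr_fun_ae measurableSet_Ioo (ae_of_all _ fun τ hτ => ?_)
        have hτ0 : 0 < τ := hτ.1
        simp only [H]
        rw [ENNReal.ofReal_rpow_of_nonneg (Real.rpow_nonneg hτ0.le _) hq0.le,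
          ← Real.rpow_mul hτ0.le]
        congr 2
        rw [hr]; ring
      have hint : IntegrableOn (fun τ : ℝ => τ ^ (-r)) (Ioo 0 t) :=
        ((intervalIntegral.intervalIntegrable_rpow' (by linarith)).1).mono_set Ioo_subset_Ioc_self
      rw [e1, ← ofReal_integral_eq_lintegral_ofReal hint
        ((ae_restrict_iff' measurableSet_Ioo).2 (ae_of_all _ fun τ hτ =>
          Real.rpow_nonneg hτ.1.le _))]
      congr 1
      rw [← integral_Ioc_eq_integral_Ioo, ← intervalIntegral.integral_of_le ht.le,
        integral_rpow (Or.inl (by linarith))]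
      rw [Real.zero_rpow (by linarith : -r + 1 ≠ 0)]
      rw [show -r + 1 = 1 - r by ring]
      ring
    calc ENNReal.ofReal ‖u t‖ ≤ ∫⁻ τ in Ioo 0 t, (F * H) τ := hcongr ▸ stepA
    _ ≤ (∫⁻ τ in Ioo 0 t, F τ ^ p) ^ (1/p) * (∫⁻ τ in Ioo 0 t, H τ ^ q) ^ (1/q) := holder
    _ ≤ G ^ (1/p) * ENNReal.ofReal (t^(1-r)/(1-r)) ^ (1/q) := by
        rw [hHq]
        exact mul_le_mul_left (ENNReal.rpow_le_rpow hFp (by positivity)) _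
  -- pointwise bound on the weighted integrand
  have hpt : ∀ t ∈ Ioo (0:ℝ) T,
      ENNReal.ofReal (t^(p*(1-μ)) * ‖u t‖^p) ≤ G * ENNReal.ofReal (K * t^(p-1)) := by
    rintro t ht
    have ht0 : 0 < t := ht.1
    have h1 : ENNReal.ofReal (t^(p*(1-μ)) * ‖u t‖^p)
        = ENNReal.ofReal (t^(p*(1-μ))) * (ENNReal.ofReal ‖u t‖) ^ p := by
      rw [ENNReal.ofReal_mul (Real.rpow_nonneg ht0.le _),
        ENNReal.ofReal_rpow_of_nonneg (norm_nonneg _) hp0.le]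
    rw [h1]
    calc ENNReal.ofReal (t^(p*(1-μ))) * (ENNReal.ofReal ‖u t‖) ^ p
        ≤ ENNReal.ofReal (t^(p*(1-μ))) *
          (G ^ (1/p) * ENNReal.ofReal (t^(1-r)/(1-r)) ^ (1/q)) ^ p :=
        mul_le_mul_right (ENNReal.rpow_le_rpow (key t ht) hp0.le) _
    _ = G * ENNReal.ofReal (K * t^(p-1)) := by
        rw [ENNReal.mul_rpow_of_nonneg _ _ hp0.le, ← ENNReal.rpow_mul, ← ENNReal.rpow_mul,
          one_div_mul_cancel hp0.ne', ENNReal.rpow_one,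
          show 1/q * p = p - 1 by rw [one_div, mul_comm, ← div_eq_mul_inv, hpq'],
          ENNReal.ofReal_rpow_of_nonneg (by positivity) (by linarith)]
        rw [← mul_assoc, mul_comm (ENNReal.ofReal _) G, mul_assoc]
        congr 1
        rw [← ENNReal.ofReal_mul (Real.rpow_nonneg ht0.le _)]
        congr 1
        have hexp : p*(1-μ) + (1-r)*(p-1) = p - 1 := by
          have h3 : r * (p-1) = p * (1-μ) := by
            rw [hr, mul_assoc, mul_comm (1-μ), ← mul_assoc, hqp]
          have h4 : (1-r)*(p-1) = (p-1) - r*(p-1) := by ring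
          rw [h4, h3]; ring
        rw [Real.inv_rpow h1r.le] at hK
        rw [Real.div_rpow (Real.rpow_nonneg ht0.le _) h1r.le, ← Real.rpow_mul ht0.le,
          div_eq_mul_inv, hK, ← mul_assoc, ← Real.rpow_add ht0, hexp, mul_comm]
  -- integrate
  have hGlt : G ≠ ⊤ := hg.2.ne
  have hwint : wInt p μ (Ioo 0 T) u ≤ G * ENNReal.ofReal (K * T^p / p) := by
    have step1 : wInt p μ (Ioo 0 T) u ≤ ∫⁻ t in Ioo 0 T, G * ENNReal.ofReal (K * t^(p-1)) := by
      unfold wInt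
      refine lintegral_mono_ae ((ae_restrict_iff' measurableSet_Ioo).2 (ae_of_all _ hpt))
    have step2 : ∫⁻ t in Ioo 0 T, G * ENNReal.ofReal (K * t^(p-1))
        = G * ∫⁻ t in Ioo 0 T, ENNReal.ofReal (K * t^(p-1)) :=
      lintegral_const_mul' _ _ hGlt
    have hint : IntegrableOn (fun t : ℝ => K * t ^ (p-1)) (Ioo 0 T) :=
      (((intervalIntegral.intervalIntegrable_rpow' (by linarith)).1).mono_set
        Ioo_subset_Ioc_self).const_mul K
    have step3 : ∫⁻ t in Ioo 0 T, ENNReal.ofReal (K * t^(p-1))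
        = ENNReal.ofReal (K * T^p / p) := by
      rw [← ofReal_integral_eq_lintegral_ofReal hint
        ((ae_restrict_iff' measurableSet_Ioo).2 (ae_of_all _ fun τ hτ =>
          mul_nonneg hKpos.le (Real.rpow_nonneg hτ.1.le _)))]
      congr 1
      rw [MeasureTheory.integral_const_mul, ← integral_Ioc_eq_integral_Ioo,
        ← intervalIntegral.integral_of_le hT.le, integral_rpow (Or.inl (by linarith)),
        Real.zero_rpow (by linarith : p - 1 + 1 ≠ 0), show p - 1 + 1 = p by ring]
      ring
    calc wInt p μ (Ioo 0 T) u ≤ _ := step1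
    _ = G * ∫⁻ t in Ioo 0 T, ENNReal.ofReal (K * t^(p-1)) := step2
    _ = G * ENNReal.ofReal (K * T^p / p) := by rw [step3]
  -- conclude
  have final : wNorm p μ (Ioo 0 T) u ≤ G ^ (1/p) * ENNReal.ofReal (K * T^p / p) ^ (1/p) := by
    unfold wNorm
    rw [← ENNReal.mul_rpow_of_nonneg _ _ (by positivity : (0:ℝ) ≤ 1/p)]
    exact ENNReal.rpow_le_rpow hwint (by positivity)
  refine final.trans_eq ?_
  rw [mul_comm]
  congr 1
  rw [ENNReal.ofReal_rpow_of_nonneg (by positivity) (by positivity)]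
  congr 1
  rw [show K * T^p / p = K/p * T^p by ring,
    Real.mul_rpow (by positivity) (Real.rpow_nonneg hT.le _),
    ← Real.rpow_mul hT.le, mul_one_div_cancel hp0.ne', Real.rpow_one]
end
end

section
/- Let E be a Banach space, p ∈ (1,∞), and μ ∈ (1/p,1]. Then every u ∈ W^1_{p,μ}((0,∞);E) has a (unique) bounded, uniformly continuous representative ũ : [0,∞) → E, and there is a constant C = C(p,μ) with sup_{t ≥ 0} ‖ũ(t)‖_E ≤ C (‖u‖_{L_{p,μ}((0,∞);E)} + ‖u'‖_{L_{p,μ}((0,∞);E)}). In particular W^1_{p,μ}((0,∞);E) embeds continuously into BUC([0,∞);E). -/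
open MeasureTheory Set Filter Topology
open scoped ENNReal NNReal

noncomputable section

lemma meas_rpow_const (r : ℝ) : Measurable fun t : ℝ => t ^ r := by measurability

lemma rpow_subadd {x y γ : ℝ} (hx : 0 ≤ x) (hy : 0 ≤ y) (h0 : 0 < γ) (h1 : γ ≤ 1) :
    (x + y) ^ γ ≤ x ^ γ + y ^ γ := by
  have h := NNReal.rpow_add_rpow_le x.toNNReal y.toNNReal h0 h1
  have h2 : (x.toNNReal + y.toNNReal : ℝ≥0) ≤ (x.toNNReal ^ γ + y.toNNReal ^ γ) ^ (1/γ) := by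
    simpa using h
  have h3 := NNReal.rpow_le_rpow h2 h0.le
  rw [← NNReal.rpow_mul, one_div, inv_mul_cancel₀ h0.ne', NNReal.rpow_one] at h3
  have h4 := NNReal.coe_le_coe.2 h3
  push_cast [NNReal.coe_rpow] at h4
  rwa [Real.coe_toNNReal _ hx, Real.coe_toNNReal _ hy] at h4

lemma lintB {β a b : ℝ} (hβ0 : 0 ≤ β) (hβ1 : β < 1) (ha : 0 ≤ a) (hab : a ≤ b) :
    ∫⁻ t in Ioo a b, ENNReal.ofReal (t ^ (-β)) ≤
      ENNReal.ofReal ((b - a) ^ (1 - β) / (1 - β)) := by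
  have hγ : 0 < 1 - β := by linarith
  have hii : IntervalIntegrable (fun t : ℝ => t ^ (-β)) volume a b :=
    intervalIntegral.intervalIntegrable_rpow' (by linarith)
  have hint : IntegrableOn (fun t : ℝ => t ^ (-β)) (Ioo a b) volume :=
    (intervalIntegrable_iff.1 hii).mono_set (by rw [uIoc_of_le hab]; exact Ioo_subset_Ioc_self)
  have hnn : 0 ≤ᵐ[volume.restrict (Ioo a b)] fun t : ℝ => t ^ (-β) := by
    filter_upwards [ae_restrict_mem measurableSet_Ioo] with t ht
    have : (0:ℝ) < t := lt_of_le_of_lt ha ht.1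
    positivity
  rw [← ofReal_integral_eq_lintegral_ofReal hint hnn]
  apply ENNReal.ofReal_le_ofReal
  have heq : ∫ t in Ioo a b, t ^ (-β) = (b ^ (1-β) - a ^ (1-β)) / (1-β) := by
    rw [← integral_Ioc_eq_integral_Ioo, ← intervalIntegral.integral_of_le hab,
      integral_rpow (Or.inl (by linarith))]
    ring_nf
  rw [heq]
  have hnum : b ^ (1-β) - a ^ (1-β) ≤ (b - a) ^ (1-β) := by
    have h := rpow_subadd ha (sub_nonneg.2 hab) hγ (by linarith)
    have hb : a + (b - a) = b := by ring
    rw [hb] at h; linarith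
  gcongr

lemma holder_aux (p μ : ℝ) (hp : 1 < p) {E : Type*} [NormedAddCommGroup E]
    (f : ℝ → E) (hm : AEStronglyMeasurable f (volume.restrict (Ioi 0)))
    {a b : ℝ} (ha : 0 ≤ a) :
    ∫⁻ t in Ioo a b, ENNReal.ofReal ‖f t‖ ≤
      wInt p μ (Ioi 0) f ^ (1/p) *
        (∫⁻ t in Ioo a b, ENNReal.ofReal (t ^ (-(p * (1 - μ) / (p - 1))))) ^ (1 - 1/p) := by
  have hp0 : (0:ℝ) < p := lt_trans one_pos hp
  have hp1 : (0:ℝ) < p - 1 := by linarith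
  set α : ℝ := p * (1 - μ) with hα
  set q : ℝ := p / (p - 1) with hq
  have hpq : p.HolderConjugate q := Real.HolderConjugate.conjExponent hp
  have h1q : 1 - 1/p = 1/q := by rw [hq]; field_simp
  set F : ℝ → ℝ≥0∞ := fun t => ENNReal.ofReal (t ^ (α/p) * ‖f t‖) with hF
  set G : ℝ → ℝ≥0∞ := fun t => ENNReal.ofReal (t ^ (-(α/p))) with hG
  have hsub : Ioo a b ⊆ Ioi 0 := fun t ht => lt_of_le_of_lt ha ht.1
  have hmono : volume.restrict (Ioo a b) ≤ volume.restrict (Ioi 0) :=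
    Measure.restrict_mono hsub le_rfl
  have hmf : AEStronglyMeasurable f (volume.restrict (Ioo a b)) := hm.mono_measure hmono
  have hmr : Measurable (fun t : ℝ => t ^ (α/p)) := meas_rpow_const _
  have hmr2 : Measurable (fun t : ℝ => t ^ (-(α/p))) := meas_rpow_const _
  have hmF : AEMeasurable F (volume.restrict (Ioo a b)) := by
    apply ENNReal.measurable_ofReal.comp_aemeasurable
    exact hmr.aemeasurable.mul hmf.norm.aemeasurable
  have hmG : AEMeasurable G (volume.restrict (Ioo a b)) :=
    (ENNReal.measurable_ofReal.comp hmr2).aemeasurable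
  have step1 : ∫⁻ t in Ioo a b, ENNReal.ofReal ‖f t‖ = ∫⁻ t in Ioo a b, (F * G) t := by
    apply lintegral_congr_ae
    filter_upwards [ae_restrict_mem measurableSet_Ioo] with t ht
    have ht0 : 0 < t := hsub ht
    simp only [Pi.mul_apply, hF, hG]
    rw [← ENNReal.ofReal_mul (by positivity)]
    congr 1
    rw [mul_comm (t ^ (α/p)) _, mul_assoc, ← Real.rpow_add ht0]
    simp
  have step2 := ENNReal.lintegral_mul_le_Lp_mul_Lq (volume.restrict (Ioo a b)) hpq hmF hmG
  have step3 : ∫⁻ t in Ioo a b, F t ^ p ≤ wInt p μ (Ioi 0) f := by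
    calc ∫⁻ t in Ioo a b, F t ^ p ≤ ∫⁻ t in Ioi 0, F t ^ p :=
          lintegral_mono_set hsub
      _ = wInt p μ (Ioi 0) f := by
          apply lintegral_congr_ae
          filter_upwards [ae_restrict_mem measurableSet_Ioi] with t ht
          have ht0 : (0:ℝ) < t := ht
          simp only [hF]
          rw [ENNReal.ofReal_rpow_of_nonneg (by positivity) hp0.le]
          congr 1
          rw [Real.mul_rpow (by positivity) (norm_nonneg _), ← Real.rpow_mul ht0.le]
          congr 2
          field_simp
          exact hα
  have step4 : ∫⁻ t in Ioo a b, G t ^ q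
      = ∫⁻ t in Ioo a b, ENNReal.ofReal (t ^ (-(α / (p - 1)))) := by
    apply lintegral_congr_ae
    filter_upwards [ae_restrict_mem measurableSet_Ioo] with t ht
    have ht0 : 0 < t := hsub ht
    simp only [hG]
    rw [ENNReal.ofReal_rpow_of_nonneg (by positivity) hpq.symm.nonneg,
      ← Real.rpow_mul ht0.le]
    congr 2
    rw [hq]; field_simp
  calc ∫⁻ t in Ioo a b, ENNReal.ofReal ‖f t‖
      = ∫⁻ t in Ioo a b, (F * G) t := step1
    _ ≤ (∫⁻ t in Ioo a b, F t ^ p) ^ (1/p) * (∫⁻ t in Ioo a b, G t ^ q) ^ (1/q) := step2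
    _ = (∫⁻ t in Ioo a b, F t ^ p) ^ (1/p)
        * (∫⁻ t in Ioo a b, ENNReal.ofReal (t ^ (-(α / (p - 1))))) ^ (1 - 1/p) := by
        rw [step4, h1q]
    _ ≤ wInt p μ (Ioi 0) f ^ (1/p)
        * (∫⁻ t in Ioo a b, ENNReal.ofReal (t ^ (-(α / (p - 1))))) ^ (1 - 1/p) :=
        mul_le_mul_left (ENNReal.rpow_le_rpow step3 (by positivity)) _

lemma key_bound (p μ : ℝ) (hp : 1 < p) {E : Type*} [NormedAddCommGroup E] [NormedSpace ℝ E]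
    (f : ℝ → E) (hm : AEStronglyMeasurable f (volume.restrict (Ioi 0)))
    (hfin : wInt p μ (Ioi 0) f < ⊤) {a b K : ℝ} (ha : 0 ≤ a) (hK0 : 0 ≤ K)
    (hK : ∫⁻ t in Ioo a b, ENNReal.ofReal (t ^ (-(p * (1 - μ) / (p - 1)))) ≤ ENNReal.ofReal K) :
    ‖∫ t in Ioo a b, f t‖ ≤ (wNorm p μ (Ioi 0) f).toReal * K ^ (1 - 1/p) := by
  have hp0 : (0:ℝ) < p := lt_trans one_pos hp
  have he : (0:ℝ) ≤ 1 - 1/p := by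
    have : 1/p < 1 := by rw [div_lt_one hp0]; exact hp
    linarith
  have h1 : ‖∫ t in Ioo a b, f t‖ ≤ (∫⁻ t in Ioo a b, ENNReal.ofReal ‖f t‖).toReal :=
    norm_integral_le_lintegral_norm _
  have h2 := holder_aux p μ hp f hm (b := b) ha
  have h3 : wInt p μ (Ioi 0) f ^ (1/p) *
      (∫⁻ t in Ioo a b, ENNReal.ofReal (t ^ (-(p * (1 - μ) / (p - 1))))) ^ (1 - 1/p) ≤
      wInt p μ (Ioi 0) f ^ (1/p) * (ENNReal.ofReal K) ^ (1 - 1/p) :=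
    mul_le_mul_right (ENNReal.rpow_le_rpow hK he) _
  have hfin2 : wInt p μ (Ioi 0) f ^ (1/p) * (ENNReal.ofReal K) ^ (1 - 1/p) ≠ ⊤ := by
    apply ENNReal.mul_ne_top
    · exact ENNReal.rpow_ne_top_of_nonneg (by positivity) hfin.ne
    · exact ENNReal.rpow_ne_top_of_nonneg he ENNReal.ofReal_ne_top
  have h4 := ENNReal.toReal_mono hfin2 (h2.trans h3)
  calc ‖∫ t in Ioo a b, f t‖ ≤ _ := h1
    _ ≤ (wInt p μ (Ioi 0) f ^ (1/p) * (ENNReal.ofReal K) ^ (1 - 1/p)).toReal := h4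
    _ = (wNorm p μ (Ioi 0) f).toReal * K ^ (1 - 1/p) := by
        rw [ENNReal.toReal_mul, wNorm]
        congr 1
        rw [← ENNReal.toReal_rpow, ENNReal.toReal_ofReal hK0]

set_option maxHeartbeats 1000000 in
/-- `W^1_{p,μ}((0,∞);E)` embeds continuously into `BUC([0,∞);E)`:
every `u ∈ W^1_{p,μ}` has a unique bounded uniformly continuous representative `ũ` on
`[0,∞)`, and `sup_{t ≥ 0} ‖ũ(t)‖ ≤ C (‖u‖_{L_{p,μ}} + ‖u'‖_{L_{p,μ}})` with `C = C(p,μ)`. -/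
theorem stmt_15 {E : Type*} [NormedAddCommGroup E] [NormedSpace ℝ E] [CompleteSpace E]
    (p μ : ℝ) (hp : 1 < p) (hμ : 1 / p < μ) (hμ1 : μ ≤ 1) :
    ∃ C : ℝ, 0 < C ∧ ∀ u u' : ℝ → E, MemW1 p μ (Ioi 0) u u' →
      ∃ v : ℝ → E,
        UniformContinuousOn v (Ici 0) ∧
        (∀ t ∈ Ioi (0 : ℝ), v t = u t) ∧
        (∀ t ∈ Ici (0 : ℝ), ‖v t‖
          ≤ C * ((wNorm p μ (Ioi 0) u).toReal + (wNorm p μ (Ioi 0) u').toReal)) ∧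
        (∀ w : ℝ → E, ContinuousOn w (Ici 0) → (∀ t ∈ Ioi (0 : ℝ), w t = u t) →
          ∀ t ∈ Ici (0 : ℝ), w t = v t) := by
  have hp0 : (0:ℝ) < p := lt_trans one_pos hp
  have hp1 : (0:ℝ) < p - 1 := by linarith
  set β : ℝ := p * (1 - μ) / (p - 1) with hβ
  have hβ0 : 0 ≤ β := div_nonneg (mul_nonneg hp0.le (by linarith)) hp1.le
  have hβ1 : β < 1 := by
    rw [hβ, div_lt_one hp1]
    have h1 : 1 < μ * p := (div_lt_iff₀ hp0).1 hμ
    nlinarith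
  set γ : ℝ := 1 - β with hγdef
  have hγ0 : 0 < γ := by simp only [hγdef]; linarith
  have hγ1 : γ ≤ 1 := by simp only [hγdef]; linarith
  set e : ℝ := 1 - 1/p with he
  have he0 : 0 < e := by
    have : 1/p < 1 := by rw [div_lt_one hp0]; exact hp
    simp only [he]; linarith
  set K : ℝ := 2 ^ γ / γ + 1 with hK
  have hKpos : 0 < 2 ^ γ / γ := by positivity
  have hK1 : 1 ≤ K := by simp only [hK]; linarith
  refine ⟨2^(1/p) + K^e + 1, by positivity, ?_⟩
  rintro u u' ⟨⟨hmu, hfu⟩, ⟨hmu', hfu'⟩, hac⟩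
  set Nu : ℝ := (wNorm p μ (Ioi 0) u).toReal with hNu
  set Nu' : ℝ := (wNorm p μ (Ioi 0) u').toReal with hNu'
  have hNu0 : 0 ≤ Nu := ENNReal.toReal_nonneg
  have hNu'0 : 0 ≤ Nu' := ENNReal.toReal_nonneg
  -- modulus of continuity
  have hdiff : ∀ a b : ℝ, 0 < a → a ≤ b → ‖u b - u a‖ ≤ Nu' * ((b-a)^γ/γ)^e := by
    intro a b ha hab
    obtain ⟨hint, heq⟩ := hac a b ha (lt_of_lt_of_le ha hab) hab
    rw [heq]
    exact key_bound p μ hp u' hmu' hfu' ha.le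
      (div_nonneg (Real.rpow_nonneg (by linarith) γ) hγ0.le) (lintB hβ0 hβ1 ha.le hab)
  set M : ℝ → ℝ := fun d => Nu' * ((d^γ/γ)^e) with hM
  have hM0 : M 0 = 0 := by
    simp only [hM, Real.zero_rpow hγ0.ne', zero_div, Real.zero_rpow he0.ne', mul_zero]
  have hMcont : ∀ x : ℝ, ContinuousAt M x := by
    intro x
    apply ContinuousAt.mul continuousAt_const
    exact ((Real.continuousAt_rpow_const x γ (Or.inr hγ0.le)).div_const γ).rpow_const
      (Or.inr he0.le)
  have hMsmall : ∀ ε > (0:ℝ), ∃ δ > (0:ℝ), ∀ d, 0 ≤ d → d < δ → M d < ε := by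
    intro ε hε
    have h2 : M ⁻¹' (Iio ε) ∈ 𝓝 (0:ℝ) :=
      (hMcont 0) (Iio_mem_nhds (by rw [hM0]; exact hε))
    obtain ⟨δ, hδ0, hδ⟩ := Metric.mem_nhds_iff.1 h2
    refine ⟨δ, hδ0, fun d hd0 hdδ => ?_⟩
    exact hδ (by simpa [Real.dist_eq, abs_of_nonneg hd0] using hdδ)
  -- Cauchy at 0
  have hkey : ∀ s s' : ℝ, 0 < s → s ≤ s' → dist (u s) (u s') ≤ M (s' - s) := by
    intro s s' hs hss
    rw [dist_eq_norm, norm_sub_rev]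
    exact hdiff s s' hs hss
  have hcauchy : Cauchy (Filter.map u (𝓝[>] (0:ℝ))) := by
    rw [Metric.cauchy_iff]
    refine ⟨Filter.map_neBot, fun ε hε => ?_⟩
    obtain ⟨δ, hδ0, hδ⟩ := hMsmall ε hε
    refine ⟨u '' Ioo 0 δ, mem_map.2 (mem_of_superset (Ioo_mem_nhdsGT_of_mem ⟨le_rfl, hδ0⟩)
      (subset_preimage_image u _)), ?_⟩
    rintro x ⟨s, hs, rfl⟩ y ⟨s', hs', rfl⟩
    have main : ∀ s s' : ℝ, s ∈ Ioo (0:ℝ) δ → s' ∈ Ioo (0:ℝ) δ → s ≤ s' →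
        dist (u s) (u s') < ε := by
      intro s s' hs hs' hss
      calc dist (u s) (u s') ≤ M (s' - s) := hkey s s' hs.1 hss
        _ < ε := hδ _ (by linarith [hss]) (by linarith [hs.1, hs'.2])
    rcases le_total s s' with h | h
    · exact main s s' hs hs' h
    · rw [dist_comm]; exact main s' s hs' hs h
  obtain ⟨L, hL⟩ := CompleteSpace.complete hcauchy
  have hLt : Tendsto u (𝓝[>] (0:ℝ)) (𝓝 L) := hL
  set v : ℝ → E := fun t => if 0 < t then u t else L with hv
  have hveq : ∀ t ∈ Ioi (0:ℝ), v t = u t := fun t ht => if_pos ht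
  have hv0 : v 0 = L := if_neg (lt_irrefl 0)
  have hvt : Tendsto v (𝓝[>] (0:ℝ)) (𝓝 L) := by
    apply hLt.congr'
    filter_upwards [self_mem_nhdsWithin] with t ht
    exact (hveq t ht).symm
  have hdiffv : ∀ a b : ℝ, 0 ≤ a → a ≤ b → ‖v b - v a‖ ≤ M (b - a) := by
    intro a b ha hab
    rcases ha.lt_or_eq with ha' | ha'
    · have hb' : (0:ℝ) < b := lt_of_lt_of_le ha' hab
      rw [hveq b hb', hveq a ha']
      exact hdiff a b ha' hab
    · rcases (ha' ▸ hab).lt_or_eq with hb | hb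
      · -- a = 0 < b
        have h1 : Tendsto (fun t => ‖v b - v t‖) (𝓝[>] (0:ℝ)) (𝓝 ‖v b - L‖) :=
          (tendsto_const_nhds.sub hvt).norm
        have h2 : Tendsto (fun t : ℝ => M (b - t)) (𝓝[>] (0:ℝ)) (𝓝 (M (b - 0))) := by
          have hcb : Tendsto (fun t : ℝ => b - t) (𝓝 (0:ℝ)) (𝓝 (b - 0)) :=
            tendsto_const_nhds.sub tendsto_id
          exact ((hMcont (b - 0)).tendsto.comp hcb).mono_left nhdsWithin_le_nhds
        have h3 : ∀ᶠ t in 𝓝[>] (0:ℝ), ‖v b - v t‖ ≤ M (b - t) := by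
          filter_upwards [Ioo_mem_nhdsGT_of_mem ⟨le_rfl, hb⟩] with t ht
          rw [hveq b hb, hveq t ht.1]
          exact hdiff t b ht.1 ht.2.le
        have h4 := le_of_tendsto_of_tendsto h1 h2 h3
        rw [← ha', hv0]
        simpa using h4
      · rw [← ha', ← hb]
        simp [hM0]
  have hUC : UniformContinuousOn v (Ici 0) := by
    rw [Metric.uniformContinuousOn_iff]
    intro ε hε
    obtain ⟨δ, hδ0, hδ⟩ := hMsmall ε hε
    refine ⟨δ, hδ0, ?_⟩
    have main : ∀ x y : ℝ, 0 ≤ x → x ≤ y → dist x y < δ → dist (v x) (v y) < ε := by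
      intro x y hx hxy hd
      rw [dist_eq_norm, norm_sub_rev]
      rw [Real.dist_eq, abs_of_nonpos (by linarith)] at hd
      calc ‖v y - v x‖ ≤ M (y - x) := hdiffv x y hx hxy
        _ < ε := hδ _ (by linarith) (by linarith)
    intro x hx y hy hxy
    rcases le_total x y with h | h
    · exact main x y hx h hxy
    · rw [dist_comm]; exact main y x hy h (dist_comm x y ▸ hxy)
  -- pointwise bound for t > 0
  have hsup : ∀ t : ℝ, 0 < t → ‖u t‖ ≤ 2^(1/p) * Nu + K^e * Nu' := by
    intro t ht
    set c : ℝ := max t 1 with hc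
    have hc1 : 1 ≤ c := le_max_right _ _
    have htc : t ≤ c := le_max_left _ _
    have hc0 : (0:ℝ) < c := lt_of_lt_of_le one_pos hc1
    set g : ℝ → ℝ≥0∞ := fun s => ENNReal.ofReal (s ^ (p*(1-μ)) * ‖u s‖^p) with hg
    set W : ℝ≥0∞ := ∫⁻ s in Ioo c (c+1), g s with hW
    have hJsub : Ioo c (c+1) ⊆ Ioi (0:ℝ) := fun s hs => lt_trans hc0 hs.1
    have hWle : W ≤ wInt p μ (Ioi 0) u := lintegral_mono_set hJsub
    have hWfin : W < ⊤ := lt_of_le_of_lt hWle hfu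
    have hvolJ : volume (Ioo c (c+1)) = 1 := by
      rw [Real.volume_Ioo]; norm_num
    have hex : ∃ s ∈ Ioo c (c+1), g s ≤ 2 * W := by
      by_contra hcon
      push_neg at hcon
      have h1 : 2 * W ≤ W := by
        calc 2*W = 2*W * volume (Ioo c (c+1)) := by rw [hvolJ, mul_one]
          _ = ∫⁻ _ in Ioo c (c+1), 2*W := (setLIntegral_const _ _).symm
          _ ≤ ∫⁻ s in Ioo c (c+1), g s :=
              setLIntegral_mono' measurableSet_Ioo (fun s hs => (hcon s hs).le)
      have hW0 : W = 0 := by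
        by_contra hWne
        have h2 := ENNReal.toReal_mono hWfin.ne h1
        rw [ENNReal.toReal_mul, ENNReal.toReal_ofNat] at h2
        have h3 : 0 < W.toReal := ENNReal.toReal_pos hWne hWfin.ne
        linarith
      have hmg : AEMeasurable g (volume.restrict (Ioo c (c+1))) := by
        apply ENNReal.measurable_ofReal.comp_aemeasurable
        have hmuJ : AEStronglyMeasurable u (volume.restrict (Ioo c (c+1))) :=
          hmu.mono_measure (Measure.restrict_mono hJsub le_rfl)
        have hm1 : Measurable (fun s : ℝ => s ^ (p*(1-μ))) := meas_rpow_const _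
        have hm2 : Measurable (fun y : ℝ => y ^ p) := meas_rpow_const _
        exact hm1.aemeasurable.mul (hm2.comp_aemeasurable hmuJ.norm.aemeasurable)
      have hae := (lintegral_eq_zero_iff' hmg).1 (hW0 ▸ hW.symm)
      have hne : volume.restrict (Ioo c (c+1)) ≠ 0 := by
        intro h0
        rw [Measure.restrict_eq_zero, hvolJ] at h0
        exact one_ne_zero h0
      haveI : (ae (volume.restrict (Ioo c (c+1)))).NeBot := ae_neBot.2 hne
      obtain ⟨s, hgs, hsJ⟩ := (hae.and (ae_restrict_mem measurableSet_Ioo)).exists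
      have := hcon s hsJ
      rw [hgs] at this
      exact absurd this (by simp)
    obtain ⟨s₀, hs₀J, hgs₀⟩ := hex
    have hs₀1 : 1 ≤ s₀ := le_of_lt (lt_of_le_of_lt hc1 hs₀J.1)
    have hs₀0 : 0 < s₀ := lt_of_lt_of_le one_pos hs₀1
    have hts₀ : t ≤ s₀ := le_of_lt (lt_of_le_of_lt htc hs₀J.1)
    -- bound on ‖u s₀‖
    have hb1 : ‖u s₀‖ ≤ 2^(1/p) * Nu := by
      have h2Wfin : 2 * W ≠ ⊤ := ENNReal.mul_ne_top (by simp) hWfin.ne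
      have h1 : s₀^(p*(1-μ)) * ‖u s₀‖^p ≤ (2*W).toReal :=
        (ENNReal.ofReal_le_iff_le_toReal h2Wfin).1 hgs₀
      have h2 : (2*W).toReal ≤ 2 * (wInt p μ (Ioi 0) u).toReal := by
        rw [ENNReal.toReal_mul, ENNReal.toReal_ofNat]
        exact mul_le_mul_of_nonneg_left (ENNReal.toReal_mono hfu.ne hWle) (by norm_num)
      have hw1 : 1 ≤ s₀^(p*(1-μ)) :=
        Real.one_le_rpow hs₀1 (mul_nonneg hp0.le (by linarith))
      have hupn : (0:ℝ) ≤ ‖u s₀‖^p := Real.rpow_nonneg (norm_nonneg _) p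
      have h3 : ‖u s₀‖^p ≤ 2 * (wInt p μ (Ioi 0) u).toReal := by nlinarith
      have h4 : ‖u s₀‖ ≤ (2 * (wInt p μ (Ioi 0) u).toReal)^(1/p) := by
        have h5 := Real.rpow_le_rpow hupn h3 (by positivity : (0:ℝ) ≤ 1/p)
        rwa [← Real.rpow_mul (norm_nonneg _), mul_one_div_cancel hp0.ne',
          Real.rpow_one] at h5
      rw [Real.mul_rpow (by norm_num) ENNReal.toReal_nonneg] at h4
      have hNueq : Nu = (wInt p μ (Ioi 0) u).toReal ^ (1/p) := by
        rw [hNu, wNorm, ← ENNReal.toReal_rpow]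
      rwa [← hNueq] at h4
    -- bound on the integral of u'
    have hKb : ∫⁻ x in Ioo t s₀, ENNReal.ofReal (x ^ (-(p * (1 - μ) / (p - 1))))
        ≤ ENNReal.ofReal K := by
      rcases lt_or_ge t 1 with h | h
      · have hceq : c = 1 := max_eq_right h.le
        have hsub2 : Ioo t s₀ ⊆ Ioo 0 2 := fun x hx =>
          ⟨lt_trans ht hx.1, lt_of_lt_of_le hx.2 (by rw [hceq] at hs₀J; linarith [hs₀J.2])⟩
        calc ∫⁻ x in Ioo t s₀, ENNReal.ofReal (x ^ (-(p * (1 - μ) / (p - 1))))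
            ≤ ∫⁻ x in Ioo (0:ℝ) 2, ENNReal.ofReal (x ^ (-(p * (1 - μ) / (p - 1)))) :=
              lintegral_mono_set hsub2
          _ ≤ ENNReal.ofReal ((2 - 0)^(1-β)/(1-β)) := lintB hβ0 hβ1 le_rfl (by norm_num)
          _ ≤ ENNReal.ofReal K := by
              apply ENNReal.ofReal_le_ofReal
              rw [hK]
              simp only [hγdef]
              norm_num
      · have hceq : c = t := max_eq_left h
        calc ∫⁻ x in Ioo t s₀, ENNReal.ofReal (x ^ (-(p * (1 - μ) / (p - 1))))
            ≤ ∫⁻ _ in Ioo t s₀, 1 := by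
              apply setLIntegral_mono' measurableSet_Ioo
              intro x hx
              rw [show (1:ℝ≥0∞) = ENNReal.ofReal 1 by simp]
              apply ENNReal.ofReal_le_ofReal
              exact Real.rpow_le_one_of_one_le_of_nonpos (le_trans h hx.1.le)
                (neg_nonpos.2 hβ0)
          _ = volume (Ioo t s₀) := setLIntegral_one _
          _ ≤ ENNReal.ofReal 1 := by
              rw [Real.volume_Ioo]
              apply ENNReal.ofReal_le_ofReal
              rw [hceq] at hs₀J
              linarith [hs₀J.2]
          _ ≤ ENNReal.ofReal K := ENNReal.ofReal_le_ofReal hK1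
    obtain ⟨hint, heq⟩ := hac t s₀ ht (lt_of_lt_of_le ht hts₀) hts₀
    have hb2 : ‖∫ x in Ioo t s₀, u' x‖ ≤ Nu' * K^e :=
      key_bound p μ hp u' hmu' hfu' ht.le (by linarith) hKb
    calc ‖u t‖ = ‖u s₀ - (u s₀ - u t)‖ := by rw [sub_sub_cancel]
      _ ≤ ‖u s₀‖ + ‖u s₀ - u t‖ := norm_sub_le _ _
      _ ≤ 2^(1/p) * Nu + K^e * Nu' := by
          apply add_le_add hb1
          rw [heq, mul_comm (K^e) Nu']
          exact hb2
  -- bound for v on Ici 0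
  have hsupv : ∀ t ∈ Ici (0:ℝ), ‖v t‖ ≤ (2^(1/p) + K^e + 1) * (Nu + Nu') := by
    have hcoef : ∀ x : ℝ, 0 < x → ‖u x‖ ≤ (2^(1/p) + K^e + 1) * (Nu + Nu') := by
      intro x hx
      have h1 := hsup x hx
      have h2 : (0:ℝ) < 2^(1/p) := by positivity
      have h3 : (0:ℝ) < K^e := by positivity
      nlinarith
    intro t ht
    rcases (mem_Ici.1 ht).lt_or_eq with ht' | ht'
    · rw [hveq t ht']
      exact hcoef t ht'
    · rw [← ht', hv0]
      have h1 : Tendsto (fun s => ‖u s‖) (𝓝[>] (0:ℝ)) (𝓝 ‖L‖) := hLt.norm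
      apply le_of_tendsto h1
      filter_upwards [self_mem_nhdsWithin] with s hs
      exact hcoef s hs
  -- uniqueness
  have huniq : ∀ w : ℝ → E, ContinuousOn w (Ici 0) → (∀ t ∈ Ioi (0 : ℝ), w t = u t) →
      ∀ t ∈ Ici (0 : ℝ), w t = v t := by
    intro w hw hwe t ht
    rcases (mem_Ici.1 ht).lt_or_eq with ht' | ht'
    · rw [hwe t ht', hveq t ht']
    · rw [← ht']
      have hw0 : Tendsto w (𝓝[>] (0:ℝ)) (𝓝 (w 0)) := by
        have := (hw 0 self_mem_Ici).tendsto
        exact this.mono_left (nhdsWithin_mono 0 Ioi_subset_Ici_self)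
      have hw0' : Tendsto u (𝓝[>] (0:ℝ)) (𝓝 (w 0)) := by
        apply hw0.congr'
        filter_upwards [self_mem_nhdsWithin] with s hs
        exact hwe s hs
      rw [hv0]
      exact tendsto_nhds_unique hw0' hLt
  exact ⟨v, hUC, hveq, hsupv, huniq⟩
end
end

section
/- Let E be a Banach space, μ ∈ (0,1], and let u : [0,∞) → E be continuously differentiable. Then for every σ > 0 the representation formula u(0) = (2−μ) ( σ^{−(2−μ)} ∫_0^σ τ^{1−μ} u(τ) dτ − (2−μ) ∫_0^σ t^{−(3−μ)} ∫_0^t τ^{1−μ} (u(t) − u(τ)) dτ dt ) holds, where all integrals are Bochner integrals and converge absolutely. -/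
open MeasureTheory Set Filter Topology
open scoped ENNReal NNReal

noncomputable section

private lemma stmt17_intOn {E : Type*} [NormedAddCommGroup E] [NormedSpace ℝ E]
    (μ : ℝ) (hμ1 : μ ≤ 1) {v : ℝ → E} (hv : ContinuousOn v (Ici 0))
    {s : ℝ} (hs : 0 < s) : IntegrableOn (fun τ => (τ ^ (1 - μ)) • v τ) (Ioo 0 s) := by
  have h1μ : (0:ℝ) ≤ 1 - μ := by linarith
  obtain ⟨M, hM⟩ := (isCompact_Icc (a := (0:ℝ)) (b := s)).exists_bound_of_continuousOn
      (hv.mono Icc_subset_Ici_self)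
  refine ⟨?_, HasFiniteIntegral.restrict_of_bounded (C := s ^ (1 - μ) * M)
      measure_Ioo_lt_top ?_⟩
  · apply ContinuousOn.aestronglyMeasurable _ measurableSet_Ioo
    apply ContinuousOn.smul
    · intro x hx
      exact (Real.continuousAt_rpow_const x _ (Or.inl (ne_of_gt hx.1))).continuousWithinAt
    · exact hv.mono (fun x hx => le_of_lt hx.1)
  · filter_upwards [ae_restrict_mem measurableSet_Ioo] with τ hτ
    rw [norm_smul, Real.norm_of_nonneg (Real.rpow_nonneg hτ.1.le _)]
    exact mul_le_mul (Real.rpow_le_rpow hτ.1.le hτ.2.le h1μ) (hM τ ⟨hτ.1.le, hτ.2.le⟩)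
      (norm_nonneg _) (Real.rpow_nonneg hs.le _)

private lemma stmt17_rpow_int (μ : ℝ) (hμ1 : μ ≤ 1) {t : ℝ} (ht : 0 < t) :
    ∫ τ in Ioo (0:ℝ) t, τ ^ (1 - μ) = t ^ (2 - μ) / (2 - μ) := by
  rw [← integral_Ioc_eq_integral_Ioo, ← intervalIntegral.integral_of_le ht.le,
    integral_rpow (Or.inl (by linarith))]
  have h : (1:ℝ) - μ + 1 = 2 - μ := by ring
  rw [h, Real.zero_rpow (by linarith : (2:ℝ) - μ ≠ 0), sub_zero]


/-- Representation formula for the initial value: for `u : [0,∞) → E`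
continuously differentiable, `μ ∈ (0,1]` and `σ > 0`,
`u(0) = (2-μ) ( σ^{-(2-μ)} ∫_0^σ τ^{1-μ} u(τ) dτ
        - (2-μ) ∫_0^σ t^{-(3-μ)} ∫_0^t τ^{1-μ} (u(t)-u(τ)) dτ dt )`,
where all integrals are Bochner integrals converging absolutely. -/
theorem stmt_17 {E : Type*} [NormedAddCommGroup E] [NormedSpace ℝ E] [CompleteSpace E]
    (μ : ℝ) (hμ0 : 0 < μ) (hμ1 : μ ≤ 1)
    (u : ℝ → E) (hu : ContDiffOn ℝ 1 u (Ici 0))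
    (σ : ℝ) (hσ : 0 < σ) :
    IntegrableOn (fun τ => (τ ^ (1 - μ)) • u τ) (Ioo 0 σ) ∧
    (∀ t ∈ Ioo (0 : ℝ) σ,
      IntegrableOn (fun τ => (τ ^ (1 - μ)) • (u t - u τ)) (Ioo 0 t)) ∧
    IntegrableOn
      (fun t => (t ^ (-(3 - μ))) • ∫ τ in Ioo (0 : ℝ) t, (τ ^ (1 - μ)) • (u t - u τ))
      (Ioo 0 σ) ∧
    u 0 = (2 - μ) •
      ((σ ^ (-(2 - μ))) • (∫ τ in Ioo (0 : ℝ) σ, (τ ^ (1 - μ)) • u τ)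
        - (2 - μ) •
          ∫ t in Ioo (0 : ℝ) σ,
            (t ^ (-(3 - μ))) • ∫ τ in Ioo (0 : ℝ) t, (τ ^ (1 - μ)) • (u t - u τ)) := by
  have h2μ : (0:ℝ) < 2 - μ := by linarith
  have h1μ : (0:ℝ) ≤ 1 - μ := by linarith
  have hucont : ContinuousOn u (Ici 0) := hu.continuousOn
  set f : ℝ → E := fun τ => (τ ^ (1 - μ)) • u τ with hfdef
  have hfint : ∀ s : ℝ, 0 < s → IntegrableOn f (Ioo 0 s) :=
    fun s hs => stmt17_intOn μ hμ1 hucont hs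
  -- part (b)
  have hb : ∀ t : ℝ, 0 < t →
      IntegrableOn (fun τ => (τ ^ (1 - μ)) • (u t - u τ)) (Ioo 0 t) := by
    intro t ht
    exact stmt17_intOn μ hμ1 (continuousOn_const.sub hucont) ht
  -- primitive G
  set G : ℝ → E := fun t => ∫ τ in (0:ℝ)..t, f τ with hGdef
  have hGIoo : ∀ t : ℝ, 0 ≤ t → G t = ∫ τ in Ioo (0:ℝ) t, f τ := by
    intro t ht
    rw [hGdef]
    simp only [intervalIntegral.integral_of_le ht, integral_Ioc_eq_integral_Ioo]
  have hfcont : ContinuousOn f (Ioi 0) := by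
    apply ContinuousOn.smul
    · intro x hx
      exact (Real.continuousAt_rpow_const x _ (Or.inl (ne_of_lt hx).symm)).continuousWithinAt
    · exact hucont.mono (fun x hx => Set.mem_Ici.2 (le_of_lt hx))
  have hfmeas : AEStronglyMeasurable f (volume.restrict (Ioi 0)) :=
    hfcont.aestronglyMeasurable measurableSet_Ioi
  have hG : ∀ t : ℝ, 0 < t → HasDerivAt G (f t) t := by
    intro t ht
    refine intervalIntegral.integral_hasDerivAt_right
      ((intervalIntegrable_iff_integrableOn_Ioo_of_le ht.le).2 (hfint t ht))
      ⟨Ioi 0, Ioi_mem_nhds ht, hfmeas⟩ ?_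
    exact hfcont.continuousAt (Ioi_mem_nhds ht)
  have hGcont : ContinuousOn G (Ioi 0) :=
    fun t ht => (hG t ht).continuousAt.continuousWithinAt
  -- inner integral identity
  have hInner : ∀ t : ℝ, 0 < t →
      (∫ τ in Ioo (0:ℝ) t, (τ ^ (1 - μ)) • (u t - u τ))
        = (t ^ (2 - μ) / (2 - μ)) • u t - G t := by
    intro t ht
    have h1 : IntegrableOn (fun τ => (τ ^ (1 - μ)) • u t) (Ioo 0 t) :=
      stmt17_intOn μ hμ1 continuousOn_const ht
    have heq : ∀ τ : ℝ, (τ ^ (1 - μ)) • (u t - u τ)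
        = (τ ^ (1 - μ)) • u t - (τ ^ (1 - μ)) • u τ := fun τ => smul_sub _ _ _
    rw [hGIoo t ht.le]
    simp only [heq]
    rw [integral_sub h1 (hfint t ht), integral_smul_const, stmt17_rpow_int μ hμ1 ht]
  -- F and its derivative
  set F : ℝ → E := fun t => (t ^ (-(2 - μ))) • G t with hFdef
  have hF : ∀ t : ℝ, 0 < t → HasDerivAt F
      ((2 - μ) • ((t ^ (-(3 - μ))) • ∫ τ in Ioo (0:ℝ) t, (τ ^ (1 - μ)) • (u t - u τ))) t := by
    intro t ht
    have hd : HasDerivAt F ((t ^ (-(2 - μ))) • f t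
        + (-(2 - μ) * t ^ (-(2 - μ) - 1)) • G t) t :=
      (Real.hasDerivAt_rpow_const (p := -(2 - μ)) (Or.inl ht.ne')).smul (hG t ht)
    convert hd using 1
    rw [hInner t ht]
    simp only [hfdef, smul_sub, smul_smul]
    have haux : t ^ (-(2 - μ)) * t ^ (1 - μ) = t ^ (-(3 - μ)) * t ^ (2 - μ) := by
      rw [← Real.rpow_add ht, ← Real.rpow_add ht]
      norm_num
    have e1 : (2 - μ) * (t ^ (-(3 - μ)) * (t ^ (2 - μ) / (2 - μ)))
        = t ^ (-(2 - μ)) * t ^ (1 - μ) := by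
      rw [haux]
      field_simp
    have e2 : (2 - μ) * t ^ (-(3 - μ)) = -(-(2 - μ) * t ^ (-(2 - μ) - 1)) := by
      rw [neg_mul, neg_neg, show -(2 - μ) - 1 = -(3 - μ) by ring]
    rw [e1, e2, neg_smul, sub_neg_eq_add]
  -- Lipschitz constant on [0, σ]
  obtain ⟨K, hK⟩ : ∃ K : ℝ≥0, LipschitzOnWith K u (Icc 0 σ) := by
    have hu' : ContDiffOn ℝ 1 u (Icc 0 σ) := hu.mono Icc_subset_Ici_self
    have hdiff : DifferentiableOn ℝ u (Icc 0 σ) := hu'.differentiableOn one_ne_zero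
    have hcont' : ContinuousOn (fun x => fderivWithin ℝ u (Icc 0 σ) x) (Icc 0 σ) :=
      hu'.continuousOn_fderivWithin (uniqueDiffOn_Icc hσ) le_rfl
    obtain ⟨M, hM⟩ := isCompact_Icc.exists_bound_of_continuousOn hcont'
    refine ⟨⟨max M 0, le_max_right _ _⟩,
      (convex_Icc 0 σ).lipschitzOnWith_of_nnnorm_fderivWithin_le hdiff (fun x hx => ?_)⟩
    apply NNReal.coe_le_coe.1
    exact (hM x hx).trans (le_max_left _ _)
  have hKnorm : ∀ t ∈ Ioo (0:ℝ) σ, ∀ τ ∈ Ioo (0:ℝ) t, ‖u t - u τ‖ ≤ K * t := by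
    intro t ht τ hτ
    have h1 := (lipschitzOnWith_iff_norm_sub_le.1 hK)
      ⟨ht.1.le, ht.2.le⟩ ⟨hτ.1.le, (hτ.2.trans ht.2).le⟩
    refine h1.trans ?_
    have : ‖t - τ‖ ≤ t := by
      rw [Real.norm_of_nonneg (by linarith [hτ.2] : (0:ℝ) ≤ t - τ)]
      linarith [hτ.1]
    exact mul_le_mul_of_nonneg_left this K.coe_nonneg
  -- bound on the inner integral
  have hInnerBound : ∀ t ∈ Ioo (0:ℝ) σ,
      ‖∫ τ in Ioo (0:ℝ) t, (τ ^ (1 - μ)) • (u t - u τ)‖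
        ≤ (t ^ (2 - μ) / (2 - μ)) * ((K : ℝ) * t) := by
    intro t ht
    refine (norm_integral_le_integral_norm _).trans ?_
    have hg : IntegrableOn (fun τ : ℝ => (τ ^ (1 - μ)) • ((K : ℝ) * t)) (Ioo 0 t) :=
      stmt17_intOn μ hμ1 continuousOn_const ht.1
    have hmono : ∫ τ in Ioo (0:ℝ) t, ‖(τ ^ (1 - μ)) • (u t - u τ)‖
        ≤ ∫ τ in Ioo (0:ℝ) t, (τ ^ (1 - μ)) * ((K : ℝ) * t) := by
      refine setIntegral_mono_on ((hb t ht.1).norm) ?_ measurableSet_Ioo ?_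
      · simpa only [smul_eq_mul] using hg
      · intro τ hτ
        rw [norm_smul, Real.norm_of_nonneg (Real.rpow_nonneg hτ.1.le _)]
        exact mul_le_mul_of_nonneg_left (hKnorm t ht τ hτ) (Real.rpow_nonneg hτ.1.le _)
    refine hmono.trans ?_
    rw [integral_mul_const, stmt17_rpow_int μ hμ1 ht.1]
  -- part (c)
  have hc : IntegrableOn
      (fun t => (t ^ (-(3 - μ))) • ∫ τ in Ioo (0 : ℝ) t, (τ ^ (1 - μ)) • (u t - u τ))
      (Ioo 0 σ) := by
    refine ⟨?_, HasFiniteIntegral.restrict_of_bounded (C := (K : ℝ) / (2 - μ))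
      measure_Ioo_lt_top ?_⟩
    · have hcont2 : ContinuousOn
          (fun t => (t ^ (-(3 - μ))) • ((t ^ (2 - μ) / (2 - μ)) • u t - G t)) (Ioo 0 σ) := by
        apply ContinuousOn.smul
        · intro x hx
          exact (Real.continuousAt_rpow_const x _ (Or.inl hx.1.ne')).continuousWithinAt
        · apply ContinuousOn.sub
          · apply ContinuousOn.smul
            · apply ContinuousOn.div_const
              intro x hx
              exact (Real.continuousAt_rpow_const x _ (Or.inl hx.1.ne')).continuousWithinAt
            · exact hucont.mono (fun x hx => hx.1.le)
          · exact hGcont.mono (fun x hx => hx.1)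
      refine (hcont2.aestronglyMeasurable measurableSet_Ioo).congr ?_
      filter_upwards [ae_restrict_mem measurableSet_Ioo] with t ht
      rw [hInner t ht.1]
    · filter_upwards [ae_restrict_mem measurableSet_Ioo] with t ht
      rw [norm_smul, Real.norm_of_nonneg (Real.rpow_nonneg ht.1.le _)]
      refine (mul_le_mul_of_nonneg_left (hInnerBound t ht) (Real.rpow_nonneg ht.1.le _)).trans ?_
      have ht3 : t ^ (-(3 - μ)) * (t ^ (2 - μ) / (2 - μ) * ((K:ℝ) * t))
          = (K:ℝ) / (2 - μ) * (t ^ (-(3 - μ)) * t ^ (2 - μ) * t ^ (1:ℝ)) := by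
        rw [Real.rpow_one]; ring
      rw [ht3, ← Real.rpow_add ht.1, ← Real.rpow_add ht.1,
        show -(3 - μ) + (2 - μ) + 1 = (0:ℝ) by ring, Real.rpow_zero, mul_one]
  -- limit of F at 0+
  have hlim : Tendsto F (𝓝[>] 0) (𝓝 ((2 - μ)⁻¹ • u 0)) := by
    rw [Metric.tendsto_nhdsWithin_nhds]
    intro ε hε
    have hcw : ContinuousWithinAt u (Ici 0) 0 := hucont 0 self_mem_Ici
    rw [Metric.continuousWithinAt_iff] at hcw
    obtain ⟨δ, hδ, hδ'⟩ := hcw (ε / 2) (by linarith)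
    refine ⟨δ, hδ, fun x hx hxδ => ?_⟩
    have hx0 : (0:ℝ) < x := hx
    have hxd : x < δ := by
      rwa [Real.dist_eq, sub_zero, abs_of_pos hx0] at hxδ
    have hub : ∀ τ ∈ Ioo (0:ℝ) x, ‖u τ - u 0‖ ≤ ε / 2 := by
      intro τ hτ
      have := hδ' hτ.1.le (by rw [Real.dist_eq, sub_zero, abs_of_pos hτ.1]; linarith [hτ.2])
      rw [dist_eq_norm] at this
      exact this.le
    have hkey : G x - (x ^ (2 - μ) / (2 - μ)) • u 0
        = ∫ τ in Ioo (0:ℝ) x, (τ ^ (1 - μ)) • (u τ - u 0) := by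
      have h1 : IntegrableOn (fun τ : ℝ => (τ ^ (1 - μ)) • u 0) (Ioo 0 x) :=
        stmt17_intOn μ hμ1 continuousOn_const hx0
      have heq : ∀ τ : ℝ, (τ ^ (1 - μ)) • (u τ - u 0)
          = (τ ^ (1 - μ)) • u τ - (τ ^ (1 - μ)) • u 0 := fun τ => smul_sub _ _ _
      simp only [heq]
      rw [integral_sub (hfint x hx0) h1, integral_smul_const, stmt17_rpow_int μ hμ1 hx0,
        hGIoo x hx0.le]
    have hsc : x ^ (-(2 - μ)) * (x ^ (2 - μ) / (2 - μ)) = (2 - μ)⁻¹ := by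
      rw [show x ^ (-(2 - μ)) * (x ^ (2 - μ) / (2 - μ))
          = x ^ (-(2 - μ)) * x ^ (2 - μ) * (2 - μ)⁻¹ by ring,
        ← Real.rpow_add hx0, show -(2 - μ) + (2 - μ) = (0:ℝ) by ring,
        Real.rpow_zero, one_mul]
    have hFx : F x - (2 - μ)⁻¹ • u 0
        = (x ^ (-(2 - μ))) • (G x - (x ^ (2 - μ) / (2 - μ)) • u 0) := by
      rw [smul_sub, smul_smul, hsc]
    have hnormint : ‖∫ τ in Ioo (0:ℝ) x, (τ ^ (1 - μ)) • (u τ - u 0)‖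
        ≤ (x ^ (2 - μ) / (2 - μ)) * (ε / 2) := by
      refine (norm_integral_le_integral_norm _).trans ?_
      have hg : IntegrableOn (fun τ : ℝ => (τ ^ (1 - μ)) • (ε / 2)) (Ioo 0 x) :=
        stmt17_intOn μ hμ1 continuousOn_const hx0
      have hmono : ∫ τ in Ioo (0:ℝ) x, ‖(τ ^ (1 - μ)) • (u τ - u 0)‖
          ≤ ∫ τ in Ioo (0:ℝ) x, (τ ^ (1 - μ)) * (ε / 2) := by
        refine setIntegral_mono_on
          ((stmt17_intOn μ hμ1 (hucont.sub continuousOn_const) hx0).norm) ?_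
          measurableSet_Ioo ?_
        · simpa only [smul_eq_mul] using hg
        · intro τ hτ
          rw [norm_smul, Real.norm_of_nonneg (Real.rpow_nonneg hτ.1.le _)]
          exact mul_le_mul_of_nonneg_left (hub τ hτ) (Real.rpow_nonneg hτ.1.le _)
      refine hmono.trans ?_
      rw [integral_mul_const, stmt17_rpow_int μ hμ1 hx0]
    rw [dist_eq_norm, hFx, hkey, norm_smul,
      Real.norm_of_nonneg (Real.rpow_nonneg hx0.le _)]
    have hle := mul_le_mul_of_nonneg_left hnormint (Real.rpow_nonneg hx0.le (-(2 - μ)))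
    have heq2 : x ^ (-(2 - μ)) * (x ^ (2 - μ) / (2 - μ) * (ε / 2))
        = (ε / 2) / (2 - μ) := by
      rw [show x ^ (-(2 - μ)) * (x ^ (2 - μ) / (2 - μ) * (ε / 2))
          = x ^ (-(2 - μ)) * x ^ (2 - μ) * ((ε / 2) / (2 - μ)) by ring,
        ← Real.rpow_add hx0, show -(2 - μ) + (2 - μ) = (0:ℝ) by ring, Real.rpow_zero, one_mul]
    rw [heq2] at hle
    have h2μ1 : (1:ℝ) ≤ 2 - μ := by linarith
    have : (ε / 2) / (2 - μ) ≤ ε / 2 := by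
      rw [div_le_iff₀ h2μ]
      nlinarith [hε.le]
    calc _ ≤ (ε / 2) / (2 - μ) := hle
      _ ≤ ε / 2 := this
      _ < ε := by linarith
  -- FTC on (0, σ)
  have hFTC : (∫ t in Ioo (0:ℝ) σ,
      (2 - μ) • ((t ^ (-(3 - μ))) • ∫ τ in Ioo (0:ℝ) t, (τ ^ (1 - μ)) • (u t - u τ)))
      = F σ - (2 - μ)⁻¹ • u 0 := by
    have := intervalIntegral.integral_eq_sub_of_hasDerivAt_of_tendsto (f := F)
      (f' := fun t => (2 - μ) • ((t ^ (-(3 - μ))) •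
        ∫ τ in Ioo (0:ℝ) t, (τ ^ (1 - μ)) • (u t - u τ)))
      hσ (fun x hx => hF x hx.1)
      ((intervalIntegrable_iff_integrableOn_Ioo_of_le hσ.le).2 (hc.smul (2 - μ)))
      hlim (((hF σ hσ).continuousAt).continuousWithinAt.tendsto)
    rwa [intervalIntegral.integral_of_le hσ.le, integral_Ioc_eq_integral_Ioo] at this
  refine ⟨hfint σ hσ, fun t ht => hb t ht.1, hc, ?_⟩
  rw [integral_smul] at hFTC
  rw [← hGIoo σ hσ.le, hFTC]
  show u 0 = (2 - μ) • (F σ - (F σ - (2 - μ)⁻¹ • u 0))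
  rw [sub_sub_cancel, smul_smul, mul_inv_cancel₀ (ne_of_gt h2μ), one_smul]
end
end
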